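/- arXiv:2510.25313 — 4 statements merged into one kernel-verified Lean document; each statement's English description precedes it below -/
import Mathlib

section
/- For every density matrix ρ on ℂ^d, M_Re(ρ) ≥ 0, and M_Re(ρ) = 0 if and only if ρ = ρ*, i.e. if and only if ρ is real. -/
open Matrix Complex ComplexOrder Classical ComplexConjugate
set_option linter.unreachableTactic false
set_option linter.unusedTactic false

/-- The positive semidefinite square root of a matrix (junk value `0` if not PSD). -/
noncomputable def psqrt {n : Type*} [Fintype n] [DecidableEq n] (A : Matrix n n ℂ) :
    Matrix n n ℂ :=
  if h : A.PosSemidef then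
    (h.1.eigenvectorUnitary : Matrix n n ℂ) * diagonal ((↑) ∘ (√·) ∘ h.1.eigenvalues) *
      (star h.1.eigenvectorUnitary : Matrix n n ℂ)
  else 0

/-- Entrywise complex conjugate of a matrix. -/
def mconj {m n : Type*} (A : Matrix m n ℂ) : Matrix m n ℂ := A.map (starRingEnd ℂ)

/-- Fidelity `F(ρ,σ) = Tr √(√ρ σ √ρ)`. -/
noncomputable def fidelity {n : Type*} [Fintype n] [DecidableEq n] (ρ σ : Matrix n n ℂ) : ℝ :=
  ((psqrt (psqrt ρ * σ * psqrt ρ)).trace).re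

/-- The real part state `Re(ρ) = (ρ + ρ*)/2`. -/
noncomputable def reState {n : Type*} (ρ : Matrix n n ℂ) : Matrix n n ℂ :=
  ((1 : ℂ)/2) • (ρ + mconj ρ)

/-- The imaginarity measure `M_Re(ρ) = 1 - F(ρ, Re(ρ))`. -/
noncomputable def MRe {n : Type*} [Fintype n] [DecidableEq n] (ρ : Matrix n n ℂ) : ℝ :=
  1 - fidelity ρ (reState ρ)

/-- A density matrix: positive semidefinite with trace 1. -/
def IsDensityMatrix {n : Type*} [Fintype n] (ρ : Matrix n n ℂ) : Prop :=
  ρ.PosSemidef ∧ ρ.trace = 1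




section PsqrtAux
open scoped MatrixOrder

lemma psqrt_eq_sqrt {n : Type*} [Fintype n] [DecidableEq n] {A : Matrix n n ℂ}
    (h : A.PosSemidef) : psqrt A = CFC.sqrt A := by
  rw [CFC.sqrt_eq_real_sqrt A h.nonneg, cfcₙ_eq_cfc, h.1.cfc_eq, IsHermitian.cfc, Unitary.conjStarAlgAut_apply,
    psqrt, dif_pos h]
  rfl

lemma psqrt_psd {n : Type*} [Fintype n] [DecidableEq n] {A : Matrix n n ℂ}
    (h : A.PosSemidef) : (psqrt A).PosSemidef := by
  rw [psqrt_eq_sqrt h]; exact nonneg_iff_posSemidef.mp (CFC.sqrt_nonneg A)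

lemma psqrt_mul_self {n : Type*} [Fintype n] [DecidableEq n] {A : Matrix n n ℂ}
    (h : A.PosSemidef) : psqrt A * psqrt A = A := by
  rw [psqrt_eq_sqrt h]; exact CFC.sqrt_mul_sqrt_self A h.nonneg

lemma eq_psqrt_of_sq_eq {n : Type*} [Fintype n] [DecidableEq n] {A B : Matrix n n ℂ}
    (hB : B.PosSemidef) (hA : A.PosSemidef) (hsq : B ^ 2 = A) : B = psqrt A := by
  rw [psqrt_eq_sqrt hA]
  exact (CFC.sqrt_unique (by rw [← pow_two]; exact hsq) hB.nonneg).symm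

end PsqrtAux

lemma psd_diag_nonneg {n : Type*} [Fintype n] [DecidableEq n] {σ : Matrix n n ℂ}
    (h : σ.PosSemidef) (i : n) : 0 ≤ σ i i := by
  have := h.dotProduct_mulVec_nonneg (Pi.single i 1)
  simpa [dotProduct, mulVec, Pi.single_apply, Finset.sum_ite_eq] using this

lemma psd_row_zero {n : Type*} [Fintype n] [DecidableEq n] {σ : Matrix n n ℂ}
    (h : σ.PosSemidef) {j : n} (hj : σ j j = 0) (i : n) : σ i j = 0 := by
  rcases eq_or_ne i j with rfl | hij
  · exact hj
  by_contra hne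
  have hns : 0 < normSq (σ i j) := Complex.normSq_pos.2 hne
  set t : ℝ := ((σ i i).re + 1) / normSq (σ i j) with ht
  set c : ℂ := -(t : ℂ) * conj (σ i j) with hc
  set x : n → ℂ := Pi.single j c + Pi.single i 1 with hx
  have hji : σ j i = conj (σ i j) := by
    have := congrFun (congrFun h.1 j) i
    simpa [conjTranspose_apply] using this.symm
  have hq := h.dotProduct_mulVec_nonneg x
  have hval : star x ⬝ᵥ σ *ᵥ x = conj c * σ j i + c * σ i j + σ i i := by
    have h1 : ∀ (k : n) (a : ℂ), σ *ᵥ Pi.single k a = fun l => σ l k * a := by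
      intro k a; funext l; simp [mulVec, Pi.single_apply, Finset.sum_ite_eq]
    have h2 : ∀ (k : n) (a : ℂ) (v : n → ℂ), star (Pi.single k a) ⬝ᵥ v = conj a * v k := by
      intro k a v
      simp [dotProduct, Pi.single_apply, apply_ite (starRingEnd ℂ), Finset.sum_ite_eq]
    simp only [hx, star_add, mulVec_add, dotProduct_add, add_dotProduct, h1, h2]
    simp [h1, h2, hj, hij, Ne.symm hij]
    ring
  rw [hval] at hq
  have hcre : (conj c * σ j i + c * σ i j + σ i i).re =
      -2 * t * normSq (σ i j) + (σ i i).re := by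
    rw [hji, hc]
    have : (-(t:ℂ) * conj (σ i j)) * σ i j = -(t:ℂ) * normSq (σ i j) := by
      rw [mul_assoc, ← Complex.normSq_eq_conj_mul_self]
    have h2 : conj (-(t:ℂ) * conj (σ i j)) * conj (σ i j)
        = -(t:ℂ) * normSq (σ i j) := by
      rw [_root_.map_mul, Complex.conj_conj, map_neg, Complex.conj_ofReal, mul_assoc,
        mul_comm (σ i j), ← Complex.normSq_eq_conj_mul_self]
    rw [this, h2]
    simp; ring
  have h0 : (0:ℝ) ≤ -2 * t * normSq (σ i j) + (σ i i).re := by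
    rw [← hcre]; exact (Complex.le_def.mp hq).1
  have hdiag : 0 ≤ (σ i i).re := (Complex.le_def.mp (psd_diag_nonneg h i)).1
  have : t * normSq (σ i j) = (σ i i).re + 1 := by
    rw [ht, div_mul_cancel₀ _ hns.ne']
  nlinarith

section Core
variable {d : ℕ} (w : Fin d → ℝ) (σ N : Matrix (Fin d) (Fin d) ℂ)

-- column sums of |N·j|² equal w j * Re σ_jj
lemma colsum (hw : ∀ i, 0 ≤ w i) (hN : N.PosSemidef)
    (hNN : N * N = diagonal (fun i => (Real.sqrt (w i) : ℂ)) * σ *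
      diagonal (fun i => (Real.sqrt (w i) : ℂ))) (j : Fin d) :
    ∑ i, normSq (N i j) = w j * (σ j j).re := by
  have hherm : ∀ a b, N a b = conj (N b a) := by
    intro a b
    have := congrFun (congrFun hN.1 a) b
    simpa [conjTranspose_apply] using this.symm
  have h1 : (N * N) j j = ((∑ i, normSq (N i j) : ℝ) : ℂ) := by
    rw [mul_apply]
    push_cast
    refine Finset.sum_congr rfl fun i _ => ?_
    rw [hherm j i, ← Complex.normSq_eq_conj_mul_self]
  have h2 : (diagonal (fun i => (Real.sqrt (w i) : ℂ)) * σ *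
      diagonal (fun i => (Real.sqrt (w i) : ℂ))) j j
      = ((w j : ℝ) : ℂ) * σ j j := by
    rw [mul_diagonal, diagonal_mul]
    rw [mul_right_comm]
    congr 1
    rw [← Complex.ofReal_mul, Real.mul_self_sqrt (hw j)]
  have := h1.symm.trans ((congrFun (congrFun hNN j) j).trans h2)
  have hre := congrArg Complex.re this
  simpa using hre
end Core

section Core2
variable {d : ℕ} {w : Fin d → ℝ} {σ N : Matrix (Fin d) (Fin d) ℂ}

lemma key_est (hw : ∀ i, 0 ≤ w i) (hw1 : ∑ i, w i = 1)
    (hσ : σ.PosSemidef) (hσt : σ.trace = 1) (hN : N.PosSemidef)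
    (hNN : N * N = diagonal (fun i => (Real.sqrt (w i) : ℂ)) * σ *
      diagonal (fun i => (Real.sqrt (w i) : ℂ)))
    {ε : ℝ} (hε : 0 < ε) :
    0 ≤ 2 - 2 * (N.trace).re + ε * d ∧
      ∀ i j, normSq (N i j - if i = j then ((w j + ε : ℝ) : ℂ) else 0) ≤
        (1 + ε) * (2 - 2 * (N.trace).re + ε * d) := by
  set t : Fin d → ℝ := fun j => w j + ε with htdef
  have ht0 : ∀ j, 0 < t j := fun j => by have := hw j; simp only [htdef]; linarith
  have hw1' : ∀ j, w j ≤ 1 := by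
    intro j
    rw [← hw1]
    exact Finset.single_le_sum (fun i _ => hw i) (Finset.mem_univ j)
  have ht1 : ∀ j, t j ≤ 1 + ε := fun j => by have := hw1' j; simp only [htdef]; linarith
  -- diag entries of σ
  have hσd : ∀ j, 0 ≤ (σ j j).re := fun j => (Complex.le_def.mp (psd_diag_nonneg hσ j)).1
  have hσtr : ∑ j, (σ j j).re = 1 := by
    have := congrArg Complex.re hσt
    simpa [Matrix.trace, Matrix.diag, Complex.re_sum] using this
  have hNtr : (N.trace).re = ∑ j, (N j j).re := by
    simp [Matrix.trace, Matrix.diag, Complex.re_sum]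
  -- inner sums
  set f : Fin d → Fin d → ℝ :=
    fun i j => normSq (N i j - if i = j then ((t j : ℝ) : ℂ) else 0) with hfdef
  have hinner : ∀ j, ∑ i, f i j = w j * (σ j j).re - 2 * t j * (N j j).re + t j ^ 2 := by
    intro j
    have hsplit : ∀ i, f i j = normSq (N i j) +
        (if i = j then -2 * t j * (N j j).re + t j ^ 2 else 0) := by
      intro i
      rcases eq_or_ne i j with rfl | hij
      · simp only [hfdef, if_pos rfl]
        simp [Complex.normSq_apply, Complex.sub_re, Complex.sub_im]
        ring
      · simp [hfdef, hij]
    rw [Finset.sum_congr rfl (fun i _ => hsplit i), Finset.sum_add_distrib,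
      Finset.sum_ite_eq' Finset.univ j, colsum w σ N hw hN hNN j]
    simp
    ring
  -- S and its value
  set S : ℝ := ∑ j, (∑ i, f i j) / t j with hSdef
  have hSval : S = (∑ j, (w j / t j) * (σ j j).re) - 2 * (N.trace).re + ∑ j, t j := by
    rw [hSdef, hNtr]
    rw [Finset.mul_sum, ← Finset.sum_sub_distrib, ← Finset.sum_add_distrib]
    refine Finset.sum_congr rfl fun j _ => ?_
    rw [hinner j]
    have hne : w j + ε ≠ 0 := (ht0 j).ne'
    field_simp [(ht0 j).ne']
  have hsum_t : ∑ j, t j = 1 + ε * d := by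
    simp only [htdef]
    rw [Finset.sum_add_distrib, hw1]
    simp [mul_comm]
  have hfrac : (∑ j, (w j / t j) * (σ j j).re) ≤ 1 := by
    rw [← hσtr]
    refine Finset.sum_le_sum fun j _ => ?_
    have h1 : w j / t j ≤ 1 := by
      rw [div_le_one (ht0 j)]; simp only [htdef]; linarith
    nlinarith [hσd j, (ht0 j).le, hw j]
  have hSle : S ≤ 2 - 2 * (N.trace).re + ε * d := by
    rw [hSval, hsum_t]; linarith
  have hS0 : 0 ≤ S := by
    refine Finset.sum_nonneg fun j _ => ?_
    exact div_nonneg (Finset.sum_nonneg fun i _ => Complex.normSq_nonneg _) (ht0 j).le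
  constructor
  · linarith
  · intro i j
    have h1 : f i j / (1 + ε) ≤ (∑ k, f k j) / t j := by
      have h2 : f i j ≤ ∑ k, f k j :=
        Finset.single_le_sum (f := fun k => f k j) (fun k _ => Complex.normSq_nonneg _)
          (Finset.mem_univ i)
      calc f i j / (1 + ε) ≤ f i j / t j :=
            div_le_div_of_nonneg_left (Complex.normSq_nonneg _) (ht0 j) (ht1 j)
        _ ≤ (∑ k, f k j) / t j := by
            have := (ht0 j).le
            gcongr
        
    have h3 : (∑ k, f k j) / t j ≤ S := by
      refine Finset.single_le_sum (f := fun j => (∑ i, f i j) / t j) ?_ (Finset.mem_univ j)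
      intro k _
      exact div_nonneg (Finset.sum_nonneg fun i _ => Complex.normSq_nonneg _) (ht0 k).le
    have h4 : f i j / (1+ε) ≤ 2 - 2*(N.trace).re + ε*d := le_trans h1 (le_trans h3 hSle)
    have h5 : f i j ≤ (1+ε) * (2 - 2*(N.trace).re + ε*d) := by
      rw [div_le_iff₀ (by linarith : (0:ℝ) < 1+ε)] at h4
      linarith [h4]
    simp only [hfdef] at h5
    first
    | exact h5
    | (convert h5 using 3 <;> push_cast <;> ring)
end Core2

section Core3
variable {d : ℕ} {w : Fin d → ℝ} {σ N : Matrix (Fin d) (Fin d) ℂ}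

lemma core (hw : ∀ i, 0 ≤ w i) (hw1 : ∑ i, w i = 1)
    (hσ : σ.PosSemidef) (hσt : σ.trace = 1) (hN : N.PosSemidef)
    (hNN : N * N = diagonal (fun i => (Real.sqrt (w i) : ℂ)) * σ *
      diagonal (fun i => (Real.sqrt (w i) : ℂ))) :
    (N.trace).re ≤ 1 ∧ ((N.trace).re = 1 → σ = diagonal (fun i => (w i : ℂ))) := by
  have hd0 : (0:ℝ) ≤ (d:ℝ) := Nat.cast_nonneg d
  constructor
  · by_contra hcon
    push_neg at hcon
    set ε : ℝ := (2*(N.trace).re - 2)/(2*(d:ℝ)+1) with hεdef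
    have hε : 0 < ε := by
      apply div_pos <;> [linarith; linarith]
    have h1 := (key_est hw hw1 hσ hσt hN hNN hε).1
    have h2 : ε * (2*(d:ℝ)+1) = 2*(N.trace).re - 2 := by
      rw [hεdef]; field_simp
    nlinarith
  · intro hTr
    -- Step 1: N is the diagonal matrix of eigenvalues
    have hNd : N = diagonal (fun i => (w i : ℂ)) := by
      ext i j
      have hz : N i j - diagonal (fun i => (w i : ℂ)) i j = 0 := by
        set z : ℂ := N i j - diagonal (fun i => (w i : ℂ)) i j with hzdef
        have hbound : ∀ ε : ℝ, 0 < ε →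
            ‖z‖ ≤ Real.sqrt ((1+ε) * (2 - 2*(N.trace).re + ε*d)) + ε := by
          intro ε hε
          have hb := (key_est hw hw1 hσ hσt hN hNN hε).2 i j
          have habs : ‖(N i j - if i = j then ((w j + ε : ℝ) : ℂ) else 0)‖ ≤
              Real.sqrt ((1+ε) * (2 - 2*(N.trace).re + ε*d)) := by
            rw [Complex.norm_def]
            exact Real.sqrt_le_sqrt hb
          have hzsplit : z = (N i j - if i = j then ((w j + ε : ℝ) : ℂ) else 0) +
              (if i = j then (ε : ℂ) else 0) := by
            rw [hzdef, diagonal_apply]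
            rcases eq_or_ne i j with rfl | hij
            · simp; push_cast; ring
            · simp [hij]
          calc ‖z‖ ≤ ‖(N i j - if i = j then ((w j + ε : ℝ) : ℂ) else 0)‖
                + ‖(if i = j then (ε : ℂ) else 0)‖ := by
                rw [hzsplit]; exact norm_add_le _ _
            _ ≤ Real.sqrt ((1+ε) * (2 - 2*(N.trace).re + ε*d)) + ε := by
                refine add_le_add habs ?_
                rcases eq_or_ne i j with rfl | hij
                · simp [abs_of_pos hε]
                · simp [hij, hε.le]
        have htends : Filter.Tendsto
            (fun ε : ℝ => Real.sqrt ((1+ε) * (2 - 2*(N.trace).re + ε*d)) + ε)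
            (nhdsWithin 0 (Set.Ioi 0)) (nhds 0) := by
          have hcont : Continuous
              (fun ε : ℝ => Real.sqrt ((1+ε) * (2 - 2*(N.trace).re + ε*d)) + ε) := by
            fun_prop
          have h0 : Real.sqrt ((1+(0:ℝ)) * (2 - 2*(N.trace).re + 0*d)) + 0 = 0 := by
            rw [hTr]; simp
          have := (hcont.tendsto 0).mono_left (nhdsWithin_le_nhds (s := Set.Ioi (0:ℝ)))
          rwa [h0] at this
        have hle : ‖z‖ ≤ 0 :=
          ge_of_tendsto htends (eventually_nhdsWithin_of_forall fun ε hε => hbound ε hε)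
        exact norm_eq_zero.mp (le_antisymm hle (norm_nonneg z))
      exact sub_eq_zero.mp hz
    -- Step 2: entrywise analysis
    have hD : ∀ i j, (if i = j then ((w i : ℂ) * (w i)) else 0) =
        ((Real.sqrt (w i) : ℂ)) * σ i j * (Real.sqrt (w j) : ℂ) := by
      intro i j
      have := congrFun (congrFun hNN i) j
      rw [hNd] at this
      rw [diagonal_mul_diagonal] at this
      rw [mul_diagonal, diagonal_mul] at this
      rw [diagonal_apply] at this
      simpa using this
    -- diagonal entries with positive weight
    have hdiagpos : ∀ j, 0 < w j → σ j j = (w j : ℂ) := by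
      intro j hj
      have h := (hD j j).symm
      rw [if_pos rfl] at h
      have hs : ((Real.sqrt (w j) : ℂ)) ≠ 0 := by
        simp [Real.sqrt_eq_zero', hj, not_le.mpr hj]
      have hss : ((Real.sqrt (w j) : ℂ)) * ((Real.sqrt (w j) : ℂ)) = ((w j : ℝ) : ℂ) := by
        rw [← Complex.ofReal_mul, Real.mul_self_sqrt (hw j)]
      rw [mul_right_comm, hss] at h
      have hwne : ((w j : ℝ) : ℂ) ≠ 0 := Complex.ofReal_ne_zero.mpr hj.ne'
      exact mul_left_cancel₀ hwne h
    -- all diagonal real parts equal w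
    have hdiagre : ∀ j, (σ j j).re = w j := by
      have hsum0 : ∑ j, ((σ j j).re - w j) = 0 := by
        rw [Finset.sum_sub_distrib, hw1]
        have : ∑ j, (σ j j).re = 1 := by
          have := congrArg Complex.re hσt
          simpa [Matrix.trace, Matrix.diag, Complex.re_sum] using this
        rw [this]; ring
      have hnn : ∀ j ∈ Finset.univ, 0 ≤ (σ j j).re - w j := by
        intro j _
        rcases (hw j).lt_or_eq with hj | hj
        · rw [hdiagpos j hj]; simp
        · have := (Complex.le_def.mp (psd_diag_nonneg hσ j)).1
          simp only [Complex.zero_re] at this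
          rw [← hj]; linarith
      intro j
      have := (Finset.sum_eq_zero_iff_of_nonneg hnn).mp hsum0 j (Finset.mem_univ j)
      linarith
    -- zero-weight diagonal entries vanish
    have hdiag0 : ∀ j, w j = 0 → σ j j = 0 := by
      intro j hj
      have h1 := psd_diag_nonneg hσ j
      have h2 := Complex.le_def.mp h1
      apply Complex.ext
      · rw [hdiagre j, hj]; rfl
      · exact (h2.2).symm
    ext i j
    rw [diagonal_apply]
    rcases eq_or_lt_of_le (hw i) with hwi | hwi
    · have hcol := psd_row_zero hσ (hdiag0 i hwi.symm)
      have : σ i j = 0 := by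
        have hherm : σ i j = conj (σ j i) := by
          have := congrFun (congrFun hσ.1 i) j
          simpa [conjTranspose_apply] using this.symm
        rw [hherm, hcol j]
        simp
      rw [this]
      rcases eq_or_ne i j with rfl | hij
      · simp [← hwi]
      · simp [hij]
    rcases eq_or_lt_of_le (hw j) with hwj | hwj
    · rw [psd_row_zero hσ (hdiag0 j hwj.symm) i]
      rcases eq_or_ne i j with rfl | hij
      · simp [← hwj]
      · simp [hij]
    -- both weights positive
    have hsi : ((Real.sqrt (w i) : ℂ)) ≠ 0 := by
      simp [Real.sqrt_eq_zero', not_le.mpr hwi]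
    have hsj : ((Real.sqrt (w j) : ℂ)) ≠ 0 := by
      simp [Real.sqrt_eq_zero', not_le.mpr hwj]
    rcases eq_or_ne i j with rfl | hij
    · rw [if_pos rfl]
      exact hdiagpos i hwi
    · rw [if_neg hij]
      have h := (hD i j).symm
      rw [if_neg hij] at h
      rcases mul_eq_zero.mp h with h1 | h1
      · rcases mul_eq_zero.mp h1 with h2 | h2
        · exact absurd h2 hsi
        · exact h2
      · exact absurd h1 hsj
end Core3


theorem stmt0 (d : ℕ) (ρ : Matrix (Fin d) (Fin d) ℂ) (hρ : IsDensityMatrix ρ) :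
    0 ≤ MRe ρ ∧ (MRe ρ = 0 ↔ ρ = mconj ρ) := by
  obtain ⟨hρp, hρt⟩ := hρ
  -- basic facts about σ = reState ρ
  have hmconj : mconj ρ = ρᵀ := by
    funext i j
    have := congrFun (congrFun hρp.1 j) i
    simp only [conjTranspose_apply] at this
    simpa [mconj, Matrix.map_apply, transpose_apply] using this
  set σ : Matrix (Fin d) (Fin d) ℂ := reState ρ with hσdef
  have hσeq : σ = ((1:ℂ)/2) • (ρ + ρᵀ) := by
    rw [hσdef]; unfold reState; rw [hmconj]
  have hσp : σ.PosSemidef := by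
    rw [hσeq]
    have hadd : (ρ + ρᵀ).PosSemidef := hρp.add hρp.transpose
    refine .of_dotProduct_mulVec_nonneg ?_ ?_
    · show ((1/2 : ℂ) • (ρ + ρᵀ))ᴴ = (1/2 : ℂ) • (ρ + ρᵀ)
      rw [conjTranspose_smul, hadd.1]
      congr 1
      simp [Complex.star_def]
    · intro x
      have h2 := hadd.dotProduct_mulVec_nonneg x
      rw [smul_mulVec, dotProduct_smul]
      rw [Complex.nonneg_iff] at h2 ⊢
      constructor
      · simp only [smul_eq_mul]
        rw [Complex.mul_re]
        norm_num
        linarith [h2.1]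
      · simp only [smul_eq_mul]
        rw [Complex.mul_im]
        norm_num
        linarith [h2.2]
  have hσt : σ.trace = 1 := by
    rw [hσeq, trace_smul, trace_add, trace_transpose, hρt]
    norm_num

  -- spectral decomposition of ρ
  set U : Matrix (Fin d) (Fin d) ℂ := (hρp.1.eigenvectorUnitary : Matrix (Fin d) (Fin d) ℂ)
    with hUdef
  set w : Fin d → ℝ := hρp.1.eigenvalues with hwdef
  have hUU : star U * U = 1 := Unitary.coe_star_mul_self _
  have hUU' : U * star U = 1 := Unitary.coe_mul_star_self _
  have hspec : ρ = U * diagonal (fun i => ((w i : ℝ) : ℂ)) * star U := hρp.1.spectral_theorem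
  have hw0 : ∀ i, 0 ≤ w i := hρp.eigenvalues_nonneg
  have hw1 : ∑ i, w i = 1 := by
    have h1 : ρ.trace = ∑ i, ((w i : ℝ) : ℂ) := by
      rw [hspec, trace_mul_cycle, hUU, one_mul, trace_diagonal]
    rw [hρt] at h1
    have := congrArg Complex.re h1
    simpa [Complex.re_sum] using this.symm
  set R : Matrix (Fin d) (Fin d) ℂ := diagonal (fun i => (Real.sqrt (w i) : ℂ)) with hRdef
  have hRpsd : R.PosSemidef :=
    PosSemidef.diagonal (fun i => Complex.zero_le_real.mpr (Real.sqrt_nonneg _))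
  have hRR : R * R = diagonal (fun i => ((w i : ℝ) : ℂ)) := by
    rw [hRdef, diagonal_mul_diagonal]
    refine congrArg diagonal (funext fun i => ?_)
    rw [← Complex.ofReal_mul, Real.mul_self_sqrt (hw0 i)]
  have hRH : Rᴴ = R := by
    rw [hRdef, diagonal_conjTranspose]
    refine congrArg diagonal (funext fun i => ?_)
    simp [Complex.star_def, Complex.conj_ofReal]
  set A : Matrix (Fin d) (Fin d) ℂ := U * R * star U with hAdef
  have hApsd : A.PosSemidef := by
    rw [hAdef, star_eq_conjTranspose]
    exact hRpsd.mul_mul_conjTranspose_same U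
  have hA2 : A * A = ρ := by
    rw [hAdef]
    have h1 : U * R * star U * (U * R * star U) = U * R * (star U * U) * R * star U := by
      simp only [mul_assoc]
    rw [h1, hUU, mul_one, mul_assoc U R R, hRR]
    exact hspec.symm
  have hpsρ : psqrt ρ = A := by
    exact (eq_psqrt_of_sq_eq hApsd hρp (by rw [pow_two, hA2])).symm
  set σ' : Matrix (Fin d) (Fin d) ℂ := star U * σ * U with hσ'def
  have hσ'p : σ'.PosSemidef := by
    rw [hσ'def, star_eq_conjTranspose]
    exact hσp.conjTranspose_mul_mul_same U
  have hσ't : σ'.trace = 1 := by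
    rw [hσ'def, trace_mul_cycle, hUU', one_mul, hσt]
  set Mp : Matrix (Fin d) (Fin d) ℂ := R * σ' * R with hMpdef
  have hMppsd : Mp.PosSemidef := by
    have h := hσ'p.conjTranspose_mul_mul_same R
    rw [hRH] at h
    rwa [hMpdef]
  set N : Matrix (Fin d) (Fin d) ℂ := psqrt Mp with hNdef
  have hNpsd : N.PosSemidef := psqrt_psd hMppsd
  have hNN : N * N = Mp := psqrt_mul_self hMppsd
  have hMeq : psqrt ρ * σ * psqrt ρ = U * Mp * star U := by
    rw [hpsρ, hAdef, hMpdef, hσ'def]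
    simp only [mul_assoc]
  have hMpsd2 : (psqrt ρ * σ * psqrt ρ).PosSemidef := by
    rw [hMeq, star_eq_conjTranspose]
    exact hMppsd.mul_mul_conjTranspose_same U
  have hUNU : psqrt (psqrt ρ * σ * psqrt ρ) = U * N * star U := by
    have hpsd : (U * N * star U).PosSemidef := by
      rw [star_eq_conjTranspose]
      exact hNpsd.mul_mul_conjTranspose_same U
    refine (eq_psqrt_of_sq_eq hpsd hMpsd2 ?_).symm
    rw [pow_two, hMeq]
    have h1 : U * N * star U * (U * N * star U) = U * N * (star U * U) * N * star U := by
      simp only [mul_assoc]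
    rw [h1, hUU, mul_one, mul_assoc U N N, hNN]
  have hfid : fidelity ρ σ = (N.trace).re := by
    show ((psqrt (psqrt ρ * σ * psqrt ρ)).trace).re = (N.trace).re
    rw [hUNU, trace_mul_cycle, hUU, one_mul]
  obtain ⟨hle, heq⟩ := core hw0 hw1 hσ'p hσ't hNpsd (by rw [hNN, hMpdef, hRdef])
  have hMRe : MRe ρ = 1 - (N.trace).re := by
    show 1 - fidelity ρ (reState ρ) = 1 - (N.trace).re
    rw [← hσdef, hfid]
  refine ⟨by rw [hMRe]; linarith, ?_, ?_⟩
  · intro h0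
    have hTr1 : (N.trace).re = 1 := by rw [hMRe] at h0; linarith
    have hσ'diag := heq hTr1
    have hσρ : σ = ρ := by
      have h1 : U * σ' * star U = σ := by
        rw [hσ'def]
        have : U * (star U * σ * U) * star U = (U * star U) * σ * (U * star U) := by
          simp only [mul_assoc]
        rw [this, hUU', one_mul, mul_one]
      rw [← h1, hσ'diag, hspec]
    have hT : ρᵀ = ρ := by
      rw [hσρ] at hσeq
      have h2 : (2:ℂ) • ρ = (2:ℂ) • (((1:ℂ)/2) • (ρ + ρᵀ)) := congrArg _ hσeq
      rw [smul_smul] at h2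
      norm_num at h2
      have h3 : ρ + ρ = ρ + ρᵀ := by rw [← two_smul ℂ ρ, h2]
      exact (add_left_cancel h3).symm
    rw [hmconj, hT]
  · intro hreal
    have hσρ : σ = ρ := by
      rw [hσdef]
      show ((1:ℂ)/2) • (ρ + mconj ρ) = ρ
      rw [← hreal, ← two_smul ℂ ρ, smul_smul]
      norm_num
    have hMM : psqrt ρ * σ * psqrt ρ = ρ * ρ := by
      rw [hσρ, hpsρ, ← hA2]
      simp only [mul_assoc]
    have hρρpsd : (ρ * ρ).PosSemidef := by
      have := hρp.pow 2
      rwa [pow_two] at this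
    have hps2 : psqrt (ρ * ρ) = ρ := by
      exact (eq_psqrt_of_sq_eq hρp hρρpsd (pow_two ρ)).symm
    have hf1 : fidelity ρ σ = 1 := by
      show ((psqrt (psqrt ρ * σ * psqrt ρ)).trace).re = 1
      rw [hMM, hps2, hρt]
      simp
    show 1 - fidelity ρ (reState ρ) = 0
    rw [← hσdef, hf1]
    ring
end

section
/- For every unit vector ψ ∈ ℂ^d with associated pure-state density matrix ρ_ψ = |ψ⟩⟨ψ|, one has M_Re(ρ_ψ) = 1 − (1/√2)·√(1 + (1 − 2·M_g(ρ_ψ))²), where M_g is the geometric imaginarity. -/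
open Matrix Complex ComplexOrder Classical

/-- The geometric imaginarity `M_g(ρ) = (1/2)(1 - F(ρ, ρ*))`. -/
noncomputable def Mg {n : Type*} [Fintype n] [DecidableEq n] (ρ : Matrix n n ℂ) : ℝ :=
  (1/2) * (1 - fidelity ρ (mconj ρ))

section aux
variable {d : ℕ} (ψ : Fin d → ℂ)

lemma outer_psd : (Matrix.vecMulVec ψ (star ψ)).PosSemidef := by
  rw [Matrix.posSemidef_iff_dotProduct_mulVec]
  constructor
  · ext i j
    simp [vecMulVec_apply, conjTranspose_apply, mul_comm]
  · intro x
    have : star x ⬝ᵥ (Matrix.vecMulVec ψ (star ψ)) *ᵥ x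
        = (star x ⬝ᵥ ψ) * (star ψ ⬝ᵥ x) := by
      simp [dotProduct, mulVec, vecMulVec_apply, Finset.mul_sum, Finset.sum_mul]
      rw [Finset.sum_comm]
      congr 1; ext i; congr 1; ext j; ring
    rw [this]
    have h2 : star ψ ⬝ᵥ x = starRingEnd ℂ (star x ⬝ᵥ ψ) := by
      simp [dotProduct, map_sum, mul_comm]
    rw [h2, mul_comm]
    exact star_mul_self_nonneg _

lemma smul_psd {n : Type*} [Fintype n] {A : Matrix n n ℂ} (hA : A.PosSemidef)
    {c : ℝ} (hc : 0 ≤ c) : ((c : ℂ) • A).PosSemidef := by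
  rw [Matrix.posSemidef_iff_dotProduct_mulVec]
  constructor
  · unfold Matrix.IsHermitian
    rw [conjTranspose_smul, hA.1.eq]
    simp
  · intro x
    rw [smul_mulVec, dotProduct_smul, smul_eq_mul]
    exact mul_nonneg (by exact_mod_cast hc) (hA.dotProduct_mulVec_nonneg x)

lemma outer_mul_mul (σ : Matrix (Fin d) (Fin d) ℂ) :
    Matrix.vecMulVec ψ (star ψ) * σ * Matrix.vecMulVec ψ (star ψ)
      = (star ψ ⬝ᵥ σ *ᵥ ψ) • Matrix.vecMulVec ψ (star ψ) := by
  ext i j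
  simp only [mul_apply, vecMulVec_apply, Matrix.smul_apply, smul_eq_mul, dotProduct, mulVec,
    Pi.star_apply]
  simp only [Finset.sum_mul, Finset.mul_sum]
  rw [Finset.sum_comm]
  congr 1; ext k; congr 1; ext l; ring

open scoped MatrixOrder in
lemma psqrt_eq_of_sq {A B : Matrix (Fin d) (Fin d) ℂ} (hA : A.PosSemidef) (hB : B.PosSemidef)
    (h : B ^ 2 = A) : psqrt A = B := by
  have e : psqrt A = cfc Real.sqrt A := by
    rw [psqrt, dif_pos hA, hA.1.cfc_eq]
    simp [IsHermitian.cfc]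
  rw [e, ← cfcₙ_eq_cfc (hf0 := Real.sqrt_zero), ← CFC.sqrt_eq_real_sqrt A hA.nonneg]
  exact CFC.sqrt_unique (by rw [← pow_two, h]) hB.nonneg

variable (hψ : star ψ ⬝ᵥ ψ = 1)
include hψ

lemma outer_sq : Matrix.vecMulVec ψ (star ψ) * Matrix.vecMulVec ψ (star ψ)
    = Matrix.vecMulVec ψ (star ψ) := by
  have h := outer_mul_mul ψ (1 : Matrix (Fin d) (Fin d) ℂ)
  rw [mul_one, one_mulVec, hψ, one_smul] at h
  exact h

lemma psqrt_outer : psqrt (Matrix.vecMulVec ψ (star ψ)) = Matrix.vecMulVec ψ (star ψ) := by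
  exact psqrt_eq_of_sq (outer_psd ψ) (outer_psd ψ) (by rw [pow_two, outer_sq ψ hψ])

lemma trace_outer : (Matrix.vecMulVec ψ (star ψ)).trace = 1 := by
  rw [← hψ]
  simp [Matrix.trace, Matrix.diag, vecMulVec_apply, dotProduct, mul_comm]

lemma fidelity_pure (σ : Matrix (Fin d) (Fin d) ℂ) (c : ℝ) (hc : 0 ≤ c)
    (hσ : star ψ ⬝ᵥ σ *ᵥ ψ = (c : ℂ)) :
    fidelity (Matrix.vecMulVec ψ (star ψ)) σ = Real.sqrt c := by
  set ρ := Matrix.vecMulVec ψ (star ψ) with hρ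
  have key : ρ * σ * ρ = (c : ℂ) • ρ := by rw [hρ, outer_mul_mul, hσ]
  have hpsd : ((c : ℂ) • ρ).PosSemidef := smul_psd (outer_psd ψ) hc
  have hpsd2 : (((Real.sqrt c : ℝ) : ℂ) • ρ).PosSemidef := smul_psd (outer_psd ψ) (Real.sqrt_nonneg c)
  have hsq : (((Real.sqrt c : ℝ) : ℂ) • ρ) ^ 2 = (c : ℂ) • ρ := by
    rw [pow_two, smul_mul_smul_comm, ← pow_two]
    rw [pow_two, outer_sq ψ hψ]
    norm_cast
    rw [Real.mul_self_sqrt hc]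
  rw [fidelity, psqrt_outer ψ hψ, key, psqrt_eq_of_sq hpsd hpsd2 hsq, trace_smul, smul_eq_mul, trace_outer ψ hψ, mul_one]
  simp

omit hψ

lemma dot_outer_dot (x u v y : Fin d → ℂ) :
    x ⬝ᵥ (Matrix.vecMulVec u v) *ᵥ y = (x ⬝ᵥ u) * (v ⬝ᵥ y) := by
  simp only [dotProduct, mulVec, vecMulVec_apply, Finset.sum_mul, Finset.mul_sum]
  rw [Finset.sum_comm]
  congr 1; ext k; congr 1; ext l; ring

lemma mconj_outer : mconj (Matrix.vecMulVec ψ (star ψ)) = Matrix.vecMulVec (star ψ) ψ := by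
  ext i j
  simp [mconj, vecMulVec_apply, mul_comm]

lemma dot_conj : star ψ ⬝ᵥ (mconj (Matrix.vecMulVec ψ (star ψ))) *ᵥ ψ
    = ((‖ψ ⬝ᵥ ψ‖ ^ 2 : ℝ) : ℂ) := by
  rw [mconj_outer, dot_outer_dot]
  have h1 : star ψ ⬝ᵥ star ψ = starRingEnd ℂ (ψ ⬝ᵥ ψ) := by
    simp [dotProduct]
  rw [h1, ← Complex.normSq_eq_conj_mul_self, ← Complex.sq_norm]

end aux

theorem stmt3 (d : ℕ) (ψ : Fin d → ℂ) (hψ : star ψ ⬝ᵥ ψ = 1) :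
    MRe (Matrix.vecMulVec ψ (star ψ)) =
      1 - (1 / Real.sqrt 2) *
        Real.sqrt (1 + (1 - 2 * Mg (Matrix.vecMulVec ψ (star ψ))) ^ 2) := by
  set t := ‖ψ ⬝ᵥ ψ‖ with ht
  have hMg : Mg (Matrix.vecMulVec ψ (star ψ)) = (1 - t) / 2 := by
    rw [Mg, fidelity_pure ψ hψ _ (t ^ 2) (sq_nonneg t) (dot_conj ψ),
      Real.sqrt_sq (norm_nonneg _)]
    ring
  have hre : star ψ ⬝ᵥ (reState (Matrix.vecMulVec ψ (star ψ))) *ᵥ ψ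
      = (((1 + t ^ 2) / 2 : ℝ) : ℂ) := by
    rw [reState, smul_mulVec, add_mulVec, dotProduct_smul, dotProduct_add,
      dot_outer_dot, dot_conj, hψ, mul_one, smul_eq_mul]
    push_cast
    ring
  have hMRe : MRe (Matrix.vecMulVec ψ (star ψ)) = 1 - Real.sqrt ((1 + t ^ 2) / 2) := by
    rw [MRe, fidelity_pure ψ hψ _ ((1 + t ^ 2) / 2)
      (by positivity) hre]
  rw [hMRe, hMg]
  have h2 : (1 : ℝ) - 2 * ((1 - t) / 2) = t := by ring
  rw [h2, Real.sqrt_div (by positivity)]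
  ring
end

section
/- Let {Π_i}_{i=0}^{d−1} be pairwise orthogonal rank-one projection matrices on ℂ^d with real entries satisfying Π_i Π_j = δ_{ij} Π_i and ∑_i Π_i = I. For a density matrix ρ on ℂ^d, set p_i = Tr(Π_i ρ Π_i) and, whenever p_i > 0, ρ_i = Π_i ρ Π_i / p_i. Then M_Re(∑_i Π_i ρ Π_i) = ∑_{i : p_i > 0} p_i · M_Re(ρ_i). -/
open Matrix Complex ComplexOrder Classical

lemma psqrt_eq_cfc {n : Type*} [Fintype n] [DecidableEq n] {A : Matrix n n ℂ}
    (h : A.PosSemidef) : psqrt A = cfc Real.sqrt A := by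
  rw [psqrt, dif_pos h, h.1.cfc_eq, IsHermitian.cfc, Unitary.conjStarAlgAut_apply]
  rfl

lemma fidelity_self_aux {n : Type*} [Fintype n] [DecidableEq n] {ρ : Matrix n n ℂ}
    (h : ρ.PosSemidef) : fidelity ρ ρ = ρ.trace.re := by
  have h1 : psqrt ρ = cfc Real.sqrt ρ := psqrt_eq_cfc h
  have hsa : IsSelfAdjoint ρ := h.1
  have hspec : ∀ x ∈ spectrum ℝ ρ, 0 ≤ x := by
    intro x hx
    rw [h.1.spectrum_real_eq_range_eigenvalues] at hx
    obtain ⟨i, rfl⟩ := hx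
    exact h.eigenvalues_nonneg i
  have hsq : (ρ * ρ).PosSemidef := by
    have := Matrix.posSemidef_conjTranspose_mul_self ρ
    rwa [h.1] at this
  have h2 : cfc Real.sqrt ρ * ρ * cfc Real.sqrt ρ = ρ * ρ := by
    have hS : cfc Real.sqrt ρ * cfc Real.sqrt ρ = ρ := by
      rw [← cfc_mul Real.sqrt Real.sqrt ρ]
      conv_rhs => rw [← cfc_id' ℝ ρ]
      exact cfc_congr (fun x hx => Real.mul_self_sqrt (hspec x hx))
    set S := cfc Real.sqrt ρ with hSdef
    rw [← hS]
    simp only [mul_assoc]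
  have h3 : ρ = cfc Real.sqrt (ρ * ρ) := by
    have hm : cfc (fun x : ℝ => x * x) ρ = ρ * ρ := by
      rw [cfc_mul (fun x : ℝ => x) (fun x : ℝ => x) ρ, cfc_id' ℝ ρ]
    rw [← hm, ← cfc_comp' Real.sqrt (fun x : ℝ => x * x) ρ]
    conv_lhs => rw [← cfc_id' ℝ ρ]
    exact cfc_congr (fun x hx => (Real.sqrt_mul_self (hspec x hx)).symm)
  unfold fidelity
  rw [h1, h2, psqrt_eq_cfc hsq, ← h3]

lemma MRe_real_aux {n : Type*} [Fintype n] [DecidableEq n] {ρ : Matrix n n ℂ}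
    (h : ρ.PosSemidef) (hc : mconj ρ = ρ) (ht : ρ.trace = 1) : MRe ρ = 0 := by
  have hr : reState ρ = ρ := by
    rw [reState, hc, ← two_smul ℂ ρ, smul_smul]
    norm_num
  rw [MRe, hr, fidelity_self_aux h, ht]
  simp

/-- A rank-one idempotent `P` satisfies `trace P = 1` and `P A P = trace(P A P) • P`. -/
lemma proj_sandwich {d : ℕ} {P : Matrix (Fin d) (Fin d) ℂ}
    (hP2 : P * P = P) (hr : P.rank = 1) :
    P.trace = 1 ∧ ∀ A : Matrix (Fin d) (Fin d) ℂ,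
      P * A * P = (P * A * P).trace • P := by
  obtain ⟨v, hv0, hv⟩ := (finrank_eq_one_iff' (K := ℂ)
    (V := ↥(LinearMap.range P.mulVecLin))).mp hr
  set v0 : Fin d → ℂ := (v : Fin d → ℂ) with hv0def
  have hcol : ∀ l : Fin d, ∃ cl : ℂ, ∀ k, P k l = cl * v0 k := by
    intro l
    have hmem : (fun k => P k l) ∈ LinearMap.range P.mulVecLin := by
      refine ⟨Pi.single l 1, ?_⟩
      ext k
      simp [Matrix.mulVecLin_apply, Matrix.mulVec, dotProduct, Pi.single_apply]
    obtain ⟨cl, hcl⟩ := hv ⟨_, hmem⟩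
    refine ⟨cl, fun k => ?_⟩
    have := congrArg (fun x : ↥(LinearMap.range P.mulVecLin) => (x : Fin d → ℂ) k) hcl
    simpa using this.symm
  choose c hc using hcol
  set t : ℂ := ∑ k, c k * v0 k with htdef
  have hPne : P ≠ 0 := by
    intro h
    rw [h, Matrix.rank_zero] at hr
    exact one_ne_zero hr.symm
  have hPP : ∀ k l, P k l * t = P k l := by
    intro k l
    have h1 : (P * P) k l = P k l := by rw [hP2]
    rw [Matrix.mul_apply] at h1
    calc P k l * t = ∑ a, P k a * P a l := by
          rw [htdef, Finset.mul_sum]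
          refine Finset.sum_congr rfl fun a _ => ?_
          rw [hc a k, hc l a, hc l k]
          ring
      _ = P k l := h1
  have ht : t = 1 := by
    by_contra hne
    apply hPne
    ext k l
    have h1 : P k l * (t - 1) = 0 := by
      rw [mul_sub, hPP k l, mul_one, sub_self]
    rcases mul_eq_zero.mp h1 with h | h
    · simpa using h
    · exact absurd (sub_eq_zero.mp h) hne
  have htr : P.trace = 1 := by
    rw [Matrix.trace, ← ht, htdef]
    refine Finset.sum_congr rfl fun k _ => ?_
    rw [Matrix.diag_apply, hc k k]
  refine ⟨htr, fun A => ?_⟩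
  set s : ℂ := ∑ j, ∑ a, c a * A a j * v0 j with hsdef
  have key : ∀ k l, (P * A * P) k l = s * P k l := by
    intro k l
    rw [Matrix.mul_apply]
    calc ∑ j, (P * A) k j * P j l = ∑ j, ∑ a, P k a * A a j * P j l := by
          refine Finset.sum_congr rfl fun j _ => ?_
          rw [Matrix.mul_apply, Finset.sum_mul]
      _ = ∑ j, ∑ a, (c a * A a j * v0 j) * P k l := by
          refine Finset.sum_congr rfl fun j _ => Finset.sum_congr rfl fun a _ => ?_
          rw [hc a k, hc l j, hc l k]
          ring
      _ = s * P k l := by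
          rw [hsdef, Finset.sum_mul]
          exact Finset.sum_congr rfl fun j _ => (Finset.sum_mul _ _ _).symm
  have htrs : (P * A * P).trace = s := by
    rw [Matrix.trace]
    calc ∑ k, (P * A * P).diag k = ∑ k, s * P k k := by
          refine Finset.sum_congr rfl fun k _ => ?_
          rw [Matrix.diag_apply, key k k]
      _ = s * P.trace := by rw [Matrix.trace, Finset.mul_sum]; rfl
      _ = s := by rw [htr, mul_one]
  ext k l
  rw [key k l, htrs, Matrix.smul_apply, smul_eq_mul]

theorem stmt4 (d : ℕ) (P : Fin d → Matrix (Fin d) (Fin d) ℂ)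
    (hreal : ∀ i k l, ((P i) k l).im = 0)
    (hherm : ∀ i, (P i).IsHermitian)
    (hrank : ∀ i, (P i).rank = 1)
    (horth : ∀ i j, P i * P j = if i = j then P i else 0)
    (hsum : ∑ i, P i = 1)
    (ρ : Matrix (Fin d) (Fin d) ℂ) (hρ : IsDensityMatrix ρ) :
    MRe (∑ i, P i * ρ * P i) =
      ∑ i ∈ Finset.univ.filter (fun i => 0 < ((P i * ρ * P i).trace).re),
        ((P i * ρ * P i).trace).re *
          MRe (((((P i * ρ * P i).trace).re : ℂ))⁻¹ • (P i * ρ * P i)) := by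
  obtain ⟨hρpsd, hρtr⟩ := hρ
  have hproj : ∀ i, P i * P i = P i := fun i => by simpa using horth i i
  have hPpsd : ∀ i, (P i).PosSemidef := by
    intro i
    have := Matrix.posSemidef_conjTranspose_mul_self (P i)
    rwa [(hherm i).eq, hproj i] at this
  have hsand := fun i => proj_sandwich (hproj i) (hrank i)
  have hkey : ∀ i, P i * ρ * P i = (P i * ρ * P i).trace • P i :=
    fun i => (hsand i).2 ρ
  have hPtr : ∀ i, (P i).trace = 1 := fun i => (hsand i).1
  have hpsd_i : ∀ i, (P i * ρ * P i).PosSemidef := by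
    intro i
    have := hρpsd.mul_mul_conjTranspose_same (P i)
    rwa [(hherm i).eq] at this
  have hple : ∀ i, 0 ≤ (P i * ρ * P i).trace := by
    intro i
    have h1 : ∀ k, 0 ≤ (P i * ρ * P i) k k := by
      intro k
      have := (hpsd_i i).dotProduct_mulVec_nonneg (Pi.single k 1)
      simpa [Matrix.mulVec, dotProduct, Pi.single_apply] using this
    exact Finset.sum_nonneg fun k _ => h1 k
  have him : ∀ i, ((P i * ρ * P i).trace).im = 0 := fun i => ((Complex.le_def.mp (hple i)).2).symm
  have hpre : ∀ i, (P i * ρ * P i).trace = (((P i * ρ * P i).trace).re : ℂ) := fun i => by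
    exact Complex.ext rfl (by simp [him i])
  have hPconj : ∀ i, mconj (P i) = P i := by
    intro i
    ext k l
    exact Complex.ext rfl (by simp [mconj, hreal i k l])
  -- the sum state
  have hσpsd : (∑ i, P i * ρ * P i).PosSemidef := by
    apply Finset.sum_induction _ _ (fun a b (ha : a.PosSemidef) (hb : b.PosSemidef) => ha.add hb)
      Matrix.PosSemidef.zero (fun i _ => hpsd_i i)
  have hσconj : mconj (∑ i, P i * ρ * P i) = ∑ i, P i * ρ * P i := by
    ext k l
    rw [mconj, Matrix.map_apply, Matrix.sum_apply, map_sum]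
    refine Finset.sum_congr rfl fun i _ => ?_
    rw [hkey i]
    simp only [Matrix.smul_apply, smul_eq_mul, _root_.map_mul]
    rw [show (starRingEnd ℂ) ((P i * ρ * P i).trace) = (P i * ρ * P i).trace from Complex.conj_eq_iff_im.mpr (him i),
      show (starRingEnd ℂ) (P i k l) = P i k l from Complex.conj_eq_iff_im.mpr (hreal i k l)]
  have hσtr : (∑ i, P i * ρ * P i).trace = 1 := by
    rw [Matrix.trace_sum]
    calc ∑ i, (P i * ρ * P i).trace = ∑ i, (P i * ρ).trace := by
          refine Finset.sum_congr rfl fun i _ => ?_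
          rw [Matrix.trace_mul_cycle, hproj i]
      _ = ((∑ i, P i) * ρ).trace := by rw [Finset.sum_mul, Matrix.trace_sum]
      _ = 1 := by rw [hsum, one_mul, hρtr]
  rw [MRe_real_aux hσpsd hσconj hσtr]
  symm
  apply Finset.sum_eq_zero
  intro i hi
  rw [Finset.mem_filter] at hi
  have hre : (0:ℝ) < ((P i * ρ * P i).trace).re := hi.2
  have harg : (((((P i * ρ * P i).trace).re : ℂ))⁻¹ • (P i * ρ * P i)) = P i := by
    nth_rewrite 2 [hkey i]
    rw [smul_smul]
    nth_rewrite 2 [hpre i]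
    rw [inv_mul_cancel₀ (by exact_mod_cast ne_of_gt hre), one_smul]
  rw [harg, MRe_real_aux (hPpsd i) (hPconj i) (hPtr i), mul_zero]
end

section
/- For every density matrix ρ on ℂ^d, M_g(ρ) ≤ 1 − (1 − M_Re(ρ))²; equivalently, F(ρ, Re(ρ))² ≤ (1 + F(ρ, ρ*))/2. -/
open Matrix Complex ComplexOrder Classical

namespace Matrix.PosSemidef

open scoped MatrixOrder

variable {n : Type*} [Fintype n] [DecidableEq n]

@[irreducible] noncomputable def sqrt {A : Matrix n n ℂ} (h : A.PosSemidef) : Matrix n n ℂ :=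
  (h.1.eigenvectorUnitary : Matrix n n ℂ) * diagonal ((↑) ∘ (√·) ∘ h.1.eigenvalues) *
      (star h.1.eigenvectorUnitary : Matrix n n ℂ)

lemma sqrt_eq_cfcSqrt {A : Matrix n n ℂ} (h : A.PosSemidef) : h.sqrt = CFC.sqrt A := by
  rw [CFC.sqrt_eq_cfc, cfc_nnreal_eq_real _ A, h.1.cfc_eq]
  rw [IsHermitian.cfc, Unitary.conjStarAlgAut_apply, sqrt]
  have : ((↑) ∘ (√·) ∘ h.1.eigenvalues : n → ℂ) =
      (RCLike.ofReal ∘ (fun x : ℝ => ((x.toNNReal).sqrt : ℝ)) ∘ h.1.eigenvalues) := by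
    funext i
    simp [max_eq_left (h.eigenvalues_nonneg i)]
  rw [this]

lemma posSemidef_sqrt {A : Matrix n n ℂ} (h : A.PosSemidef) : h.sqrt.PosSemidef := by
  rw [sqrt_eq_cfcSqrt]; exact (CFC.sqrt_nonneg A).posSemidef

lemma sqrt_mul_self {A : Matrix n n ℂ} (h : A.PosSemidef) : h.sqrt * h.sqrt = A := by
  rw [sqrt_eq_cfcSqrt]; exact CFC.sqrt_mul_sqrt_self A h.nonneg

lemma eq_sqrt_of_sq_eq {A : Matrix n n ℂ} (hA : A.PosSemidef) (B : Matrix n n ℂ)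
    {hB : B.PosSemidef} (hAB : A ^ 2 = B) : A = hB.sqrt := by
  rw [sqrt_eq_cfcSqrt, eq_comm, CFC.sqrt_eq_iff B A hB.nonneg hA.nonneg, ← sq, hAB]

lemma sqrt_def {A : Matrix n n ℂ} (h : A.PosSemidef) : h.sqrt =
    (h.1.eigenvectorUnitary : Matrix n n ℂ) * diagonal ((↑) ∘ (√·) ∘ h.1.eigenvalues) *
      (star h.1.eigenvectorUnitary : Matrix n n ℂ) := by
  rw [sqrt]

end Matrix.PosSemidef

namespace Aux

set_option linter.unusedSectionVars false

variable {n : Type*} [Fintype n] [DecidableEq n]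

lemma mconj_eq {A : Matrix n n ℂ} : mconj A = (Aᴴ)ᵀ := by
  ext i j; simp [mconj, conjTranspose_apply]

lemma mconj_mul (A B : Matrix n n ℂ) : mconj (A * B) = mconj A * mconj B :=
  Matrix.map_mul

lemma mconj_add (A B : Matrix n n ℂ) : mconj (A + B) = mconj A + mconj B := by
  ext i j; simp [mconj]

lemma mconj_mconj (A : Matrix n n ℂ) : mconj (mconj A) = A := by
  ext i j; simp [mconj]

lemma mconj_conjTranspose (A : Matrix n n ℂ) : (mconj A)ᴴ = mconj (Aᴴ) := by
  ext i j; simp [mconj, conjTranspose_apply]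

lemma trace_mconj (A : Matrix n n ℂ) : (mconj A).trace = star A.trace := by
  simp [Matrix.trace, mconj]

lemma posSemidef_mconj {A : Matrix n n ℂ} (h : A.PosSemidef) : (mconj A).PosSemidef := by
  rw [mconj_eq]; exact h.conjTranspose.transpose

lemma trace_nonneg {M : Matrix n n ℂ} (h : M.PosSemidef) : 0 ≤ M.trace := by
  have : ∀ i, 0 ≤ M i i := by
    intro i
    exact h.diag_nonneg
  exact Finset.sum_nonneg fun i _ => this i

lemma trace_re_cast {M : Matrix n n ℂ} (h : M.PosSemidef) :
    M.trace = ((M.trace.re : ℝ) : ℂ) := by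
  have h0 := trace_nonneg h
  rw [Complex.le_def] at h0
  simp only [Complex.zero_re, Complex.zero_im] at h0
  apply Complex.ext
  · simp
  · simp [← h0.2]

lemma trace_conjTranspose_mul_self_eq_zero {X : Matrix n n ℂ} (h : (Xᴴ * X).trace = 0) :
    X = 0 := by
  have h2 : ∑ j, ∑ i, Complex.normSq (X i j) = 0 := by
    have := congrArg Complex.re h
    simpa [Matrix.trace, Matrix.mul_apply, conjTranspose_apply, Complex.normSq,
      Complex.mul_re, Complex.mul_im, mul_comm] using this
  ext i j
  have hj : ∑ i, Complex.normSq (X i j) = 0 := by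
    have := (Finset.sum_eq_zero_iff_of_nonneg (fun j _ => Finset.sum_nonneg
      (fun i _ => Complex.normSq_nonneg _))).1 h2 j (Finset.mem_univ j)
    exact this
  have := (Finset.sum_eq_zero_iff_of_nonneg (fun i _ => Complex.normSq_nonneg _)).1 hj i
    (Finset.mem_univ i)
  simpa using Complex.normSq_eq_zero.1 this

lemma trace_eq_zero_of_psd {M : Matrix n n ℂ} (h : M.PosSemidef) (ht : M.trace = 0) :
    M = 0 := by
  have hs : h.sqrt * h.sqrt = M := h.sqrt_mul_self
  have h2 : (h.sqrtᴴ * h.sqrt).trace = 0 := by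
    rw [h.posSemidef_sqrt.1]; rw [hs, ht]
  have : h.sqrt = 0 := trace_conjTranspose_mul_self_eq_zero h2
  rw [← hs, this, mul_zero]


/-- Existence of a Moore–Penrose-type pseudoinverse for a Hermitian matrix. -/
lemma exists_pinv {H : Matrix n n ℂ} (hH : H.IsHermitian) :
    ∃ N : Matrix n n ℂ, N.IsHermitian ∧ H * N = N * H ∧ H * N * H = H ∧ N * H * N = N := by
  classical
  set U : Matrix n n ℂ := (hH.eigenvectorUnitary : Matrix n n ℂ) with hUdef
  have hU : star U * U = 1 := Unitary.coe_star_mul_self hH.eigenvectorUnitary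
  set g : n → ℝ := fun i => if hH.eigenvalues i = 0 then 0 else (hH.eigenvalues i)⁻¹ with hgdef
  set D : Matrix n n ℂ := diagonal (RCLike.ofReal ∘ hH.eigenvalues) with hDdef
  set E : Matrix n n ℂ := diagonal (RCLike.ofReal ∘ g) with hEdef
  have hspec : H = U * D * star U := hH.spectral_theorem
  have hDE : D * E = E * D := by
    rw [hDdef, hEdef, diagonal_mul_diagonal, diagonal_mul_diagonal]
    exact congrArg diagonal (funext fun i => mul_comm _ _)
  have hDED : D * E * D = D := by
    rw [hDdef, hEdef, diagonal_mul_diagonal, diagonal_mul_diagonal]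
    refine congrArg diagonal (funext fun i => ?_)
    simp only [Function.comp_apply, hgdef]
    by_cases h : hH.eigenvalues i = 0
    · simp [h]
    · push_cast [h]
      field_simp
  have hEDE : E * D * E = E := by
    rw [hDdef, hEdef, diagonal_mul_diagonal, diagonal_mul_diagonal]
    refine congrArg diagonal (funext fun i => ?_)
    simp only [Function.comp_apply, hgdef]
    by_cases h : hH.eigenvalues i = 0
    · simp [h]
    · push_cast [h]
      field_simp
  have hmul : ∀ X Y : Matrix n n ℂ, (U * X * star U) * (U * Y * star U) = U * (X * Y) * star U := by
    intro X Y
    have h1 : U * X * star U * (U * Y * star U) = U * X * (star U * U) * (Y * star U) := by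
      simp only [Matrix.mul_assoc]
    rw [h1, hU, Matrix.mul_one]
    simp only [Matrix.mul_assoc]
  have hE : E.IsHermitian := by
    show Eᴴ = E
    rw [hEdef, diagonal_conjTranspose]
    refine congrArg diagonal (funext fun i => ?_)
    simp [Pi.star_apply]
  refine ⟨U * E * star U, ?_, ?_, ?_, ?_⟩
  · show (U * E * star U)ᴴ = U * E * star U
    calc (U * E * star U)ᴴ = (star U)ᴴ * (Eᴴ * Uᴴ) := by
          simp [conjTranspose_mul, Matrix.mul_assoc]
      _ = U * E * star U := by
          rw [hE.eq]
          simp [star_eq_conjTranspose, Matrix.mul_assoc]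
  · rw [hspec, hmul, hmul, hDE]
  · rw [hspec, hmul, hmul, hDED]
  · rw [hspec, hmul, hmul, hEDE]

/-- Uniqueness of the commuting Hermitian pseudoinverse. -/
lemma pinv_unique {H N₁ N₂ : Matrix n n ℂ}
    (h1H : N₁.IsHermitian) (h1c : H * N₁ = N₁ * H) (h1a : H * N₁ * H = H) (h1b : N₁ * H * N₁ = N₁)
    (h2H : N₂.IsHermitian) (h2c : H * N₂ = N₂ * H) (h2a : H * N₂ * H = H) (h2b : N₂ * H * N₂ = N₂)
    (hH : H.IsHermitian) : N₁ = N₂ := by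
  have hP1 : (H * N₁)ᴴ = H * N₁ := by rw [conjTranspose_mul, h1H.eq, hH.eq, h1c]
  have hP2 : (H * N₂)ᴴ = H * N₂ := by rw [conjTranspose_mul, h2H.eq, hH.eq, h2c]
  have hPi12 : (H * N₁) * (H * N₂) = H * N₂ := by
    calc (H * N₁) * (H * N₂) = (H * N₁ * H) * N₂ := by simp only [Matrix.mul_assoc]
      _ = H * N₂ := by rw [h1a]
  have hPi21 : (H * N₂) * (H * N₁) = H * N₁ := by
    calc (H * N₂) * (H * N₁) = (H * N₂ * H) * N₁ := by simp only [Matrix.mul_assoc]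
      _ = H * N₁ := by rw [h2a]
  have hPieq : H * N₁ = H * N₂ := by
    calc H * N₁ = (H * N₂) * (H * N₁) := hPi21.symm
      _ = ((H * N₁)ᴴ * (H * N₂)ᴴ)ᴴ := by simp [conjTranspose_mul]
      _ = ((H * N₁) * (H * N₂))ᴴ := by rw [hP1, hP2]
      _ = (H * N₂)ᴴ := by rw [hPi12]
      _ = H * N₂ := hP2
  calc N₁ = N₁ * H * N₁ := h1b.symm
    _ = N₁ * (H * N₁) := by rw [Matrix.mul_assoc]
    _ = N₁ * (H * N₂) := by rw [hPieq]
    _ = (N₁ * H) * N₂ := by rw [Matrix.mul_assoc]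
    _ = (H * N₁) * N₂ := by rw [h1c]
    _ = (H * N₂) * N₂ := by rw [hPieq]
    _ = (N₂ * H) * N₂ := by rw [h2c]
    _ = N₂ := h2b

/-- If a Hermitian `P` absorbs `M * Mᴴ` then it absorbs `M`. -/
lemma absorb {P M : Matrix n n ℂ} (hP : P.IsHermitian) (h : P * (M * Mᴴ) = M * Mᴴ) :
    P * M = M := by
  have hQP : (M * Mᴴ) * P = M * Mᴴ := by
    have := congrArg conjTranspose h
    simpa [conjTranspose_mul, Matrix.mul_assoc, hP.eq] using this
  have hzero : (M - P * M) * (M - P * M)ᴴ = 0 := by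
    have expand : (M - P * M) * (M - P * M)ᴴ =
        M * Mᴴ - (M * Mᴴ) * Pᴴ - P * (M * Mᴴ) + P * ((M * Mᴴ) * Pᴴ) := by
      rw [conjTranspose_sub, conjTranspose_mul, sub_mul, mul_sub, mul_sub]
      simp only [Matrix.mul_assoc]
      abel
    rw [expand, hP.eq, hQP, h]
    abel
  have : (M - P * M)ᴴᴴ * (M - P * M)ᴴ = 0 := by
    rw [conjTranspose_conjTranspose, hzero]
  have h0 : (M - P * M)ᴴ = 0 := Matrix.conjTranspose_mul_self_eq_zero.mp this
  have : M - P * M = 0 := by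
    have := congrArg conjTranspose h0
    simpa using this
  linear_combination (norm := noncomm_ring) -this


/-- For PSD `Z` and Hermitian idempotent `P`, `Tr(P Z) ≤ Tr Z` (in the complex order). -/
lemma trace_proj_le {P Z : Matrix n n ℂ} (hZ : Z.PosSemidef) (hP : P.IsHermitian)
    (hPP : P * P = P) : (P * Z).trace ≤ Z.trace := by
  have hEP : (1 - P).PosSemidef := by
    have h1 : (1 - P)ᴴ * (1 - P) = 1 - P := by
      rw [conjTranspose_sub, conjTranspose_one, hP.eq, mul_sub, sub_mul, sub_mul, hPP]
      simp only [Matrix.one_mul, Matrix.mul_one]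
      abel
    rw [← h1]
    exact posSemidef_conjTranspose_mul_self _
  have hS := hZ.posSemidef_sqrt
  have hzs : hZ.sqrt * hZ.sqrt = Z := hZ.sqrt_mul_self
  have hY : (hZ.sqrtᴴ * (1 - P) * hZ.sqrt).PosSemidef := hEP.conjTranspose_mul_mul_same _
  have htr : (hZ.sqrtᴴ * (1 - P) * hZ.sqrt).trace = Z.trace - (P * Z).trace := by
    rw [hS.1.eq]
    rw [Matrix.mul_sub, Matrix.sub_mul, Matrix.mul_one]
    rw [Matrix.trace_sub, hzs]
    congr 1
    rw [Matrix.mul_assoc, Matrix.trace_mul_comm, Matrix.mul_assoc, hzs]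
  have := trace_nonneg hY
  rw [htr] at this
  exact sub_nonneg.mp this


/-- Cauchy–Schwarz for the Frobenius inner product. -/
lemma cs_trace (X Y : Matrix n n ℂ) :
    ‖(Xᴴ * Y).trace‖ ^ 2 ≤ ((Xᴴ * X).trace).re * ((Yᴴ * Y).trace).re := by
  classical
  let f : Matrix n n ℂ → EuclideanSpace ℂ (n × n) := fun M => WithLp.toLp 2 (fun p : n × n => M p.1 p.2)
  have htr : ∀ A B : Matrix n n ℂ, (Aᴴ * B).trace = inner ℂ (f A) (f B) := by
    intro A B
    rw [show (inner ℂ (f A) (f B) : ℂ) = ∑ p : n × n, (starRingEnd ℂ) (f A p) * f B p from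
      by rw [PiLp.inner_apply]; simp only [RCLike.inner_apply']]
    rw [Fintype.sum_prod_type]
    rw [Matrix.trace]
    rw [Finset.sum_comm]
    simp [Matrix.mul_apply, Matrix.diag, conjTranspose_apply, f]
  have hnorm : ∀ A : Matrix n n ℂ, ((Aᴴ * A).trace).re = ‖f A‖ ^ 2 := by
    intro A
    have := htr A A
    have h2 : (RCLike.re (inner ℂ (f A) (f A) : ℂ) : ℝ) = ‖f A‖ ^ 2 :=
      inner_self_eq_norm_sq (𝕜 := ℂ) (f A)
    rw [this]
    exact h2
  rw [htr, hnorm, hnorm]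
  have := norm_inner_le_norm (𝕜 := ℂ) (f X) (f Y)
  calc ‖(inner ℂ (f X) (f Y) : ℂ)‖ ^ 2 = ‖(inner ℂ (f X) (f Y) : ℂ)‖ ^ 2 := by
        rfl
    _ ≤ (‖f X‖ * ‖f Y‖) ^ 2 := by
        have h0 : (0:ℝ) ≤ ‖(inner ℂ (f X) (f Y) : ℂ)‖ := norm_nonneg _
        nlinarith
    _ = ‖f X‖ ^ 2 * ‖f Y‖ ^ 2 := by ring


lemma sqrt_congr {A B : Matrix n n ℂ} (h : A = B) (hA : A.PosSemidef) (hB : B.PosSemidef) :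
    hA.sqrt = hB.sqrt := by subst h; rfl

/-- `Tr √(AᴴA) = Tr √(AAᴴ)`. -/
lemma trace_sqrt_mul_comm (A : Matrix n n ℂ) :
    ((posSemidef_conjTranspose_mul_self A).sqrt).trace
      = ((posSemidef_self_mul_conjTranspose A).sqrt).trace := by
  set hAAH := posSemidef_self_mul_conjTranspose A with hAAHdef
  set H := hAAH.sqrt with hHdef
  have hH : H.PosSemidef := hAAH.posSemidef_sqrt
  obtain ⟨N, hNH, hNc, hNa, hNb⟩ := exists_pinv hH.1
  have hHH : H * H = A * Aᴴ := hAAH.sqrt_mul_self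
  have hPiHerm : (H * N).IsHermitian := by
    show (H * N)ᴴ = H * N
    rw [conjTranspose_mul, hNH.eq, hH.1.eq, hNc]
  have hPiA : (H * N) * A = A := by
    refine absorb hPiHerm ?_
    calc (H * N) * (A * Aᴴ) = (H * N) * (H * H) := by rw [hHH]
      _ = (H * N * H) * H := by simp only [Matrix.mul_assoc]
      _ = H * H := by rw [hNa]
      _ = A * Aᴴ := hHH
  set W := N * A with hWdef
  have hHW : H * W = A := by
    rw [hWdef, ← Matrix.mul_assoc, hPiA]
  have hWH : Wᴴ = Aᴴ * N := by rw [hWdef, conjTranspose_mul, hNH.eq]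
  have hsq : (Wᴴ * H * W) * (Wᴴ * H * W) = Aᴴ * A := by
    have hWWH : H * (W * Wᴴ) * H = H * H := by
      calc H * (W * Wᴴ) * H = H * (N * (A * Aᴴ) * N) * H := by
            rw [hWdef, hWH]; simp only [Matrix.mul_assoc]
        _ = H * (N * (H * H) * N) * H := by rw [hHH]
        _ = (H * N * H) * (H * N * H) := by simp only [Matrix.mul_assoc]
        _ = H * H := by rw [hNa]
    calc (Wᴴ * H * W) * (Wᴴ * H * W) = Wᴴ * (H * (W * Wᴴ) * H) * W := by
          simp only [Matrix.mul_assoc]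
      _ = Wᴴ * (H * H) * W := by rw [hWWH]
      _ = (H * W)ᴴ * (H * W) := by
          rw [show (H * W)ᴴ = Wᴴ * H from by rw [conjTranspose_mul, hH.1.eq]]
          simp only [Matrix.mul_assoc]
      _ = Aᴴ * A := by rw [hHW]
  have hWHW : (Wᴴ * H * W).PosSemidef := hH.conjTranspose_mul_mul_same W
  have heq : Wᴴ * H * W = (posSemidef_conjTranspose_mul_self A).sqrt := by
    refine hWHW.eq_sqrt_of_sq_eq _ ?_
    rw [pow_two, hsq]
  rw [← heq]
  calc (Wᴴ * H * W).trace = ((H * W) * Wᴴ).trace := by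
        rw [Matrix.mul_assoc, Matrix.trace_mul_comm]
    _ = (H * (H * N)).trace := by
        rw [hWdef, hWH]
        congr 1
        calc H * (N * A) * (Aᴴ * N) = H * N * (A * Aᴴ) * N := by simp only [Matrix.mul_assoc]
          _ = H * N * (H * H) * N := by rw [hHH]
          _ = (H * N * H) * (H * N) := by simp only [Matrix.mul_assoc]
          _ = H * (H * N) := by rw [hNa]
    _ = ((H * N) * H).trace := Matrix.trace_mul_comm _ _
    _ = H.trace := by rw [hNa]


lemma sqrt_mconj {A : Matrix n n ℂ} (h : A.PosSemidef) :
    (posSemidef_mconj h).sqrt = mconj h.sqrt := by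
  have hc : (mconj h.sqrt).PosSemidef := posSemidef_mconj h.posSemidef_sqrt
  have : mconj h.sqrt = (posSemidef_mconj h).sqrt := by
    refine hc.eq_sqrt_of_sq_eq _ ?_
    rw [pow_two, ← mconj_mul, h.sqrt_mul_self]
  exact this.symm

set_option maxHeartbeats 2000000 in
/-- Uhlmann-type bound: if `B * Bᴴ = ρ` then `Re Tr(B (B̄)ᴴ) ≤ Tr √(√ρ ρ̄ √ρ)`. -/
lemma uhlmann {ρ B : Matrix n n ℂ} (hρ : ρ.PosSemidef) (hB : B * Bᴴ = ρ) :
    ((B * (mconj B)ᴴ).trace).re ≤ fidelity ρ (mconj ρ) := by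
  set G := hρ.sqrt with hGdef
  have hfid : (G * mconj ρ * G).PosSemidef := by
    have h1 := (posSemidef_mconj hρ).mul_mul_conjTranspose_same G
    rwa [(hρ.posSemidef_sqrt.1.eq : Gᴴ = G)] at h1
  have hfideq : fidelity ρ (mconj ρ) = (hfid.sqrt.trace).re := by
    have h1 : psqrt ρ = G := by unfold psqrt; rw [dif_pos hρ, ← Matrix.PosSemidef.sqrt_def]
    have h2 : psqrt (G * mconj ρ * G) = hfid.sqrt := by unfold psqrt; rw [dif_pos hfid, ← Matrix.PosSemidef.sqrt_def]
    unfold fidelity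
    rw [h1, h2]
  rw [hfideq]
  have hG : G.PosSemidef := hρ.posSemidef_sqrt
  have hGG : G * G = ρ := hρ.sqrt_mul_self
  have hGherm : Gᴴ = G := hG.1.eq
  have hGm : (mconj G)ᴴ = mconj G := by rw [mconj_conjTranspose, hGherm]
  set A := mconj G * G with hAdef
  have hAHA : Aᴴ * A = G * mconj ρ * G := by
    rw [hAdef, conjTranspose_mul, hGm, hGherm]
    calc G * mconj G * (mconj G * G) = G * (mconj G * mconj G) * G := by
          simp only [Matrix.mul_assoc]
      _ = G * mconj ρ * G := by rw [← mconj_mul, hGG]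
  set HM := mconj G * ρ * mconj G with hHMdef
  have hAAH : A * Aᴴ = HM := by
    rw [hAdef, conjTranspose_mul, hGm, hGherm, hHMdef]
    calc mconj G * G * (G * mconj G) = mconj G * (G * G) * mconj G := by
          simp only [Matrix.mul_assoc]
      _ = mconj G * ρ * mconj G := by rw [hGG]
  have hHM : HM.PosSemidef := by
    rw [hHMdef]
    have := hρ.mul_mul_conjTranspose_same (mconj G)
    rwa [hGm] at this
  set H := hHM.sqrt with hHdef
  have hH : H.PosSemidef := hHM.posSemidef_sqrt
  have hHH : H * H = HM := hHM.sqrt_mul_self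
  have hHherm : Hᴴ = H := hH.1.eq
  -- the right-hand side equals Tr H
  have hRHS : hfid.sqrt.trace = H.trace := by
    have e1 : G * mconj ρ * G = Aᴴ * A := hAHA.symm
    calc hfid.sqrt.trace = ((posSemidef_conjTranspose_mul_self A).sqrt).trace := by
          rw [sqrt_congr e1 hfid (posSemidef_conjTranspose_mul_self A)]
      _ = ((posSemidef_self_mul_conjTranspose A).sqrt).trace := trace_sqrt_mul_comm A
      _ = H.trace := by rw [sqrt_congr hAAH (posSemidef_self_mul_conjTranspose A) hHM]
  clear_value H
  clear hHdef
  -- pseudoinverse of G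
  obtain ⟨N, hNH, hNc, hNa, hNb⟩ := exists_pinv hG.1
  have hPiB : (G * N) * B = B := by
    refine absorb ?_ ?_
    · show (G * N)ᴴ = G * N
      rw [conjTranspose_mul, hNH.eq, hGherm, hNc]
    · rw [hB]
      calc (G * N) * ρ = (G * N) * (G * G) := by rw [hGG]
        _ = (G * N * G) * G := by simp only [Matrix.mul_assoc]
        _ = G * G := by rw [hNa]
        _ = ρ := hGG
  set W := N * B with hWdef
  have hGW : G * W = B := by rw [hWdef, ← Matrix.mul_assoc, hPiB]
  have hWWH : W * Wᴴ = G * N := by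
    rw [hWdef, conjTranspose_mul, hNH.eq]
    calc N * B * (Bᴴ * N) = N * (B * Bᴴ) * N := by simp only [Matrix.mul_assoc]
      _ = N * (G * G) * N := by rw [hB, hGG]
      _ = (N * G) * (G * N) := by simp only [Matrix.mul_assoc]
      _ = (G * N) * (G * N) := by rw [← hNc]
      _ = (G * N * G) * N := by simp only [Matrix.mul_assoc]
      _ = G * N := by rw [hNa]
  have hNGN : N * G * N = N := hNb
  have hNN : N * (N * ρ * N) * N = N * N := by
    calc N * (N * ρ * N) * N = N * (N * (G * G) * N) * N := by rw [hGG]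
      _ = N * ((N * G) * (G * N)) * N := by simp only [Matrix.mul_assoc]
      _ = N * ((G * N) * (G * N)) * N := by rw [← hNc]
      _ = N * ((G * N * G) * N) * N := by simp only [Matrix.mul_assoc]
      _ = N * (G * N) * N := by rw [hNa]
      _ = (N * G * N) * N := by simp only [Matrix.mul_assoc]
      _ = N * N := by rw [hNGN]
  have hPw : (Wᴴ * W) * (Wᴴ * W) = Wᴴ * W := by
    calc (Wᴴ * W) * (Wᴴ * W) = Bᴴ * N * ((N * (B * Bᴴ) * N)) * N * B := by
          rw [hWdef, conjTranspose_mul, hNH.eq]; simp only [Matrix.mul_assoc]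
      _ = Bᴴ * N * (N * ρ * N) * N * B := by rw [hB]
      _ = Bᴴ * (N * (N * ρ * N) * N) * B := by simp only [Matrix.mul_assoc]
      _ = Bᴴ * (N * N) * B := by rw [hNN]
      _ = Wᴴ * W := by
          rw [hWdef, conjTranspose_mul, hNH.eq]; simp only [Matrix.mul_assoc]
  have hPwherm : (Wᴴ * W).IsHermitian := by
    show (Wᴴ * W)ᴴ = Wᴴ * W
    simp [conjTranspose_mul]
  clear_value W
  clear hWdef
  clear_value G
  -- pseudoinverse of H
  obtain ⟨M, hMH, hMc, hMa, hMb⟩ := exists_pinv hH.1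
  have hPiA : (H * M) * A = A := by
    refine absorb ?_ ?_
    · show (H * M)ᴴ = H * M
      rw [conjTranspose_mul, hMH.eq, hHherm, hMc]
    · rw [hAAH, ← hHH]
      calc (H * M) * (H * H) = (H * M * H) * H := by simp only [Matrix.mul_assoc]
        _ = H * H := by rw [hMa]
  set WA := M * A with hWAdef
  have hHWA : H * WA = A := by rw [hWAdef, ← Matrix.mul_assoc, hPiA]
  -- the quantity q = Tr(A K)
  have hq : B * (mconj B)ᴴ = G * (W * ((mconj W)ᴴ * mconj G)) := by
    rw [← hGW, mconj_mul, conjTranspose_mul, hGm]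
    simp only [Matrix.mul_assoc]
  have hqtr : (B * (mconj B)ᴴ).trace = (A * (W * (mconj W)ᴴ)).trace := by
    rw [hq, Matrix.trace_mul_comm, Matrix.trace_mul_comm A]
    simp only [hAdef, Matrix.mul_assoc]
  -- Cauchy–Schwarz with X = √H, Y = √H * (WA * (W * (mconj W)ᴴ))
  have hRpsd : hH.sqrt.PosSemidef := hH.posSemidef_sqrt
  obtain ⟨R, hR, hRR, hRtr⟩ : ∃ R : Matrix n n ℂ,
      R.PosSemidef ∧ R * R = H ∧ True := ⟨hH.sqrt, hRpsd, hH.sqrt_mul_self, trivial⟩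
  have hRherm : Rᴴ = R := hR.1.eq
  set K := W * (mconj W)ᴴ with hKdef
  have hAK : (A * K).trace = (Rᴴ * (R * (WA * K))).trace := by
    rw [hRherm, ← Matrix.mul_assoc R R, hRR, ← Matrix.mul_assoc H WA K, hHWA]
  have hCS := cs_trace R (R * (WA * K))
  rw [← hAK, hRherm, hRR] at hCS
  -- bound Tr(YᴴY) ≤ Tr H
  have hKH : Kᴴ = mconj W * Wᴴ := by
    rw [hKdef, conjTranspose_mul, conjTranspose_conjTranspose]
  have hexp : (R * (WA * K))ᴴ * (R * (WA * K)) = Kᴴ * (WAᴴ * H * WA) * K := by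
    calc (R * (WA * K))ᴴ * (R * (WA * K))
        = Kᴴ * WAᴴ * (Rᴴ * R) * (WA * K) := by
          simp only [conjTranspose_mul, Matrix.mul_assoc]
      _ = Kᴴ * (WAᴴ * H * WA) * K := by
          rw [hRherm, hRR]; simp only [Matrix.mul_assoc]
  have hYc : (WAᴴ * H * WA).PosSemidef := hH.conjTranspose_mul_mul_same WA
  have hstep1 : (Kᴴ * (WAᴴ * H * WA) * K).trace
      ≤ ((Wᴴ * (WAᴴ * H * WA) * W)).trace := by
    have hrw : (Kᴴ * (WAᴴ * H * WA) * K).trace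
        = ((mconj (Wᴴ * W)) * (Wᴴ * (WAᴴ * H * WA) * W)).trace := by
      calc (Kᴴ * (WAᴴ * H * WA) * K).trace
          = (mconj W * (Wᴴ * ((WAᴴ * H * WA) * (W * (mconj W)ᴴ)))).trace := by
            rw [hKH, hKdef]; congr 1; simp only [Matrix.mul_assoc]
        _ = ((Wᴴ * ((WAᴴ * H * WA) * (W * (mconj W)ᴴ))) * mconj W).trace :=
            Matrix.trace_mul_comm _ _
        _ = ((Wᴴ * ((WAᴴ * H * WA) * W)) * ((mconj W)ᴴ * mconj W)).trace := by
            congr 1; simp only [Matrix.mul_assoc]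
        _ = (((mconj W)ᴴ * mconj W) * (Wᴴ * ((WAᴴ * H * WA) * W))).trace :=
            Matrix.trace_mul_comm _ _
        _ = ((mconj (Wᴴ * W)) * (Wᴴ * (WAᴴ * H * WA) * W)).trace := by
            rw [mconj_mul, mconj_conjTranspose]; congr 1; simp only [Matrix.mul_assoc]
    rw [hrw]
    refine trace_proj_le (hYc.conjTranspose_mul_mul_same W) ?_ ?_
    · show (mconj (Wᴴ * W))ᴴ = mconj (Wᴴ * W)
      rw [mconj_conjTranspose, hPwherm.eq]
    · rw [← mconj_mul, hPw]
  have hstep2 : ((Wᴴ * (WAᴴ * H * WA) * W)).trace ≤ (WAᴴ * H * WA).trace := by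
    have hrw : ((Wᴴ * (WAᴴ * H * WA) * W)).trace = ((G * N) * (WAᴴ * H * WA)).trace := by
      calc ((Wᴴ * (WAᴴ * H * WA) * W)).trace
          = (Wᴴ * ((WAᴴ * H * WA) * W)).trace := by congr 1; simp only [Matrix.mul_assoc]
        _ = (((WAᴴ * H * WA) * W) * Wᴴ).trace := Matrix.trace_mul_comm _ _
        _ = ((WAᴴ * H * WA) * (W * Wᴴ)).trace := by congr 1; simp only [Matrix.mul_assoc]
        _ = ((W * Wᴴ) * (WAᴴ * H * WA)).trace := Matrix.trace_mul_comm _ _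
        _ = ((G * N) * (WAᴴ * H * WA)).trace := by rw [hWWH]
    rw [hrw]
    refine trace_proj_le hYc ?_ ?_
    · show (G * N)ᴴ = G * N
      rw [conjTranspose_mul, hNH.eq, hGherm, hNc]
    · calc (G * N) * (G * N) = (G * N * G) * N := by simp only [Matrix.mul_assoc]
        _ = G * N := by rw [hNa]
  have hstep3 : (WAᴴ * H * WA).trace = H.trace := by
    calc (WAᴴ * H * WA).trace
        = (WAᴴ * (H * WA)).trace := by congr 1; simp only [Matrix.mul_assoc]
      _ = ((H * WA) * WAᴴ).trace := Matrix.trace_mul_comm _ _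
      _ = (A * (Aᴴ * M)).trace := by rw [hHWA, hWAdef, conjTranspose_mul, hMH.eq]
      _ = ((A * Aᴴ) * M).trace := by congr 1; simp only [Matrix.mul_assoc]
      _ = ((H * H) * M).trace := by rw [hAAH, ← hHH]
      _ = (M * (H * H)).trace := Matrix.trace_mul_comm _ _
      _ = ((M * H) * H).trace := by congr 1; simp only [Matrix.mul_assoc]
      _ = ((H * M) * H).trace := by rw [hMc]
      _ = H.trace := by rw [hMa]
  -- assemble
  have htH : 0 ≤ H.trace := trace_nonneg hH
  have htHre : (0:ℝ) ≤ H.trace.re := by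
    rw [Complex.le_def] at htH; simpa using htH.1
  have hYle : (((R * (WA * K))ᴴ * (R * (WA * K))).trace).re ≤ H.trace.re := by
    have : (Kᴴ * (WAᴴ * H * WA) * K).trace ≤ H.trace := by
      calc (Kᴴ * (WAᴴ * H * WA) * K).trace ≤ ((Wᴴ * (WAᴴ * H * WA) * W)).trace := hstep1
        _ ≤ (WAᴴ * H * WA).trace := hstep2
        _ = H.trace := hstep3
    rw [hexp]
    rw [Complex.le_def] at this
    exact this.1
  have habs : ‖(B * (mconj B)ᴴ).trace‖ ≤ H.trace.re := by
    have h1 : ‖(B * (mconj B)ᴴ).trace‖ ^ 2 ≤ H.trace.re * H.trace.re := by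
      calc ‖(B * (mconj B)ᴴ).trace‖ ^ 2
          = ‖(A * K).trace‖ ^ 2 := by rw [hqtr]
        _ ≤ H.trace.re * (((R * (WA * K))ᴴ * (R * (WA * K))).trace).re := hCS
        _ ≤ H.trace.re * H.trace.re := by
            exact mul_le_mul_of_nonneg_left hYle htHre
    nlinarith [norm_nonneg ((B * (mconj B)ᴴ).trace)]
  calc ((B * (mconj B)ᴴ).trace).re ≤ ‖(B * (mconj B)ᴴ).trace‖ :=
        Complex.re_le_norm _
    _ ≤ H.trace.re := habs
    _ = (hfid.sqrt.trace).re := by rw [hRHS]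


lemma mconj_smul (c : ℂ) (A : Matrix n n ℂ) : mconj (c • A) = star c • mconj A := by
  ext i j; simp [mconj]

lemma half_smul_psd {M : Matrix n n ℂ} (h : M.PosSemidef) : (((1:ℂ)/2) • M).PosSemidef := by
  have hhalf : (0:ℂ) ≤ (1/2:ℂ) := by
    rw [Complex.le_def]; norm_num
  exact h.smul hhalf

set_option maxHeartbeats 2000000 in
/-- Key estimate: `F(ρ, Re ρ)² ≤ (1 + F(ρ, ρ̄))/2`. -/
lemma key {ρ : Matrix n n ℂ} (hρ : ρ.PosSemidef) (htr : ρ.trace = 1) :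
    fidelity ρ (reState ρ) ^ 2 ≤ (1 + fidelity ρ (mconj ρ)) / 2 := by
  -- the real-part state
  have hmρ : (mconj ρ).PosSemidef := posSemidef_mconj hρ
  have hτ : (reState ρ).PosSemidef := half_smul_psd (hρ.add hmρ)
  set τ := reState ρ with hτdef
  have hτconj : mconj τ = τ := by
    rw [hτdef, reState, mconj_smul, mconj_add, mconj_mconj]
    have : star ((1:ℂ)/2) = (1:ℂ)/2 := by simp
    rw [this, add_comm]
  have hτtr : τ.trace = 1 := by
    rw [hτdef, reState, Matrix.trace_smul, Matrix.trace_add, trace_mconj, htr]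
    simp
    norm_num
  have hρ2τ : ρ + mconj ρ = (2:ℂ) • τ := by
    rw [hτdef, reState, smul_smul]
    norm_num
  clear_value τ
  clear hτdef
  -- square roots
  set Gr := hρ.sqrt with hGrdef
  have hGr : Gr.PosSemidef := hρ.posSemidef_sqrt
  have hGrherm : Grᴴ = Gr := hGr.1.eq
  have hGrGr : Gr * Gr = ρ := hρ.sqrt_mul_self
  have hpsqρ : psqrt ρ = Gr := by unfold psqrt; rw [dif_pos hρ, ← Matrix.PosSemidef.sqrt_def]
  clear_value Gr
  set G := hτ.sqrt with hGdef
  have hG : G.PosSemidef := hτ.posSemidef_sqrt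
  have hGherm : Gᴴ = G := hG.1.eq
  have hGG : G * G = τ := hτ.sqrt_mul_self
  have hGconj : mconj G = G := by
    have h1 : (posSemidef_mconj hτ).sqrt = mconj hτ.sqrt := sqrt_mconj hτ
    have h2 : (posSemidef_mconj hτ).sqrt = hτ.sqrt := by
      rw [sqrt_congr hτconj (posSemidef_mconj hτ) hτ]
    rw [hGdef, ← h1, h2]
  clear_value G
  clear hGdef
  -- P = G ρ G and its square root S
  have hP : (G * ρ * G).PosSemidef := by
    have h1 := hρ.mul_mul_conjTranspose_same G
    rwa [hGherm] at h1
  set P := G * ρ * G with hPdef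
  set S := hP.sqrt with hSdef
  have hS : S.PosSemidef := hP.posSemidef_sqrt
  have hSherm : Sᴴ = S := hS.1.eq
  have hSS : S * S = P := hP.sqrt_mul_self
  have hSconj : mconj S * mconj S = mconj P := by rw [← mconj_mul, hSS]
  have hSmherm : (mconj S)ᴴ = mconj S := by rw [mconj_conjTranspose, hSherm]
  -- Fr = Re Tr S
  have hFr : fidelity ρ τ = (S.trace).re := by
    have hfid1 : (Gr * τ * Gr).PosSemidef := by
      have h1 := hτ.mul_mul_conjTranspose_same Gr
      rwa [hGrherm] at h1
    have hpsq2 : psqrt (Gr * τ * Gr) = hfid1.sqrt := by unfold psqrt; rw [dif_pos hfid1, ← Matrix.PosSemidef.sqrt_def]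
    have e1 : Gr * τ * Gr = (G * Gr)ᴴ * (G * Gr) := by
      rw [conjTranspose_mul, hGherm, hGrherm]
      calc Gr * τ * Gr = Gr * (G * G) * Gr := by rw [hGG]
        _ = Gr * G * (G * Gr) := by simp only [Matrix.mul_assoc]
    have e2 : (G * Gr) * (G * Gr)ᴴ = P := by
      rw [conjTranspose_mul, hGherm, hGrherm, hPdef]
      calc G * Gr * (Gr * G) = G * (Gr * Gr) * G := by simp only [Matrix.mul_assoc]
        _ = G * ρ * G := by rw [hGrGr]
    unfold fidelity
    rw [hpsqρ, hpsq2]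
    congr 1
    calc hfid1.sqrt.trace
        = ((posSemidef_conjTranspose_mul_self (G * Gr)).sqrt).trace := by
          rw [sqrt_congr e1 hfid1 (posSemidef_conjTranspose_mul_self (G * Gr))]
      _ = ((posSemidef_self_mul_conjTranspose (G * Gr)).sqrt).trace :=
          trace_sqrt_mul_comm (G * Gr)
      _ = S.trace := by
          rw [hSdef, sqrt_congr e2 (posSemidef_self_mul_conjTranspose (G * Gr)) hP]
  clear_value S
  clear hSdef
  -- pseudoinverse of G
  obtain ⟨N, hNH, hNc, hNa, hNb⟩ := exists_pinv hG.1
  have hNconj : mconj N = N := by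
    refine pinv_unique ?_ ?_ ?_ ?_ hNH hNc hNa hNb hG.1
    · show (mconj N)ᴴ = mconj N
      rw [mconj_conjTranspose, hNH.eq]
    · calc G * mconj N = mconj (G * N) := by rw [mconj_mul, hGconj]
        _ = mconj (N * G) := by rw [hNc]
        _ = mconj N * G := by rw [mconj_mul, hGconj]
    · calc G * mconj N * G = mconj (G * N * G) := by rw [mconj_mul, mconj_mul, hGconj]
        _ = G := by rw [hNa, hGconj]
    · calc mconj N * G * mconj N = mconj (N * G * N) := by
            rw [mconj_mul, mconj_mul, hGconj]
        _ = mconj N := by rw [hNb]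
  have hPiherm : (G * N)ᴴ = G * N := by rw [conjTranspose_mul, hNH.eq, hGherm, hNc]
  have hPiP : (G * N) * P = P := by
    rw [hPdef]
    calc (G * N) * (G * ρ * G) = (G * N * G) * (ρ * G) := by simp only [Matrix.mul_assoc]
      _ = G * (ρ * G) := by rw [hNa]
      _ = G * ρ * G := by simp only [Matrix.mul_assoc]
  have hPiS : (G * N) * S = S := by
    refine absorb hPiherm ?_
    rw [hSherm, hSS, hPiP]
  have hPiSm : (G * N) * mconj S = mconj S := by
    calc (G * N) * mconj S = mconj ((G * N) * S) := by
          rw [mconj_mul, mconj_mul, hGconj, hNconj]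
      _ = mconj S := by rw [hPiS]
  -- support of ρ is inside support of τ
  have hPiρ : (G * N) * ρ = ρ := by
    have hPiτ : (G * N) * τ = τ := by
      calc (G * N) * τ = (G * N) * (G * G) := by rw [hGG]
        _ = (G * N * G) * G := by simp only [Matrix.mul_assoc]
        _ = G * G := by rw [hNa]
        _ = τ := hGG
    set E : Matrix n n ℂ := 1 - G * N with hEdef
    have hEherm : Eᴴ = E := by rw [hEdef, conjTranspose_sub, conjTranspose_one, hPiherm]
    have hEτ : E * τ = 0 := by
      rw [hEdef, Matrix.sub_mul, Matrix.one_mul, hPiτ, sub_self]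
    have hEτE : E * τ * Eᴴ = 0 := by rw [hEτ, Matrix.zero_mul]
    have hsum : E * ρ * Eᴴ + E * mconj ρ * Eᴴ = 0 := by
      have : E * (ρ + mconj ρ) * Eᴴ = E * ((2:ℂ) • τ) * Eᴴ := by rw [hρ2τ]
      calc E * ρ * Eᴴ + E * mconj ρ * Eᴴ = E * (ρ + mconj ρ) * Eᴴ := by
            rw [Matrix.mul_add, Matrix.add_mul]
        _ = E * ((2:ℂ) • τ) * Eᴴ := by rw [hρ2τ]
        _ = (2:ℂ) • (E * τ * Eᴴ) := by
            rw [Matrix.mul_smul, Matrix.smul_mul]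
        _ = 0 := by rw [hEτE, smul_zero]
    have hP1 : (E * ρ * Eᴴ).PosSemidef := hρ.mul_mul_conjTranspose_same E
    have hP2 : (E * mconj ρ * Eᴴ).PosSemidef := hmρ.mul_mul_conjTranspose_same E
    have htr0 : (E * ρ * Eᴴ).trace = 0 := by
      have h1 := trace_nonneg hP1
      have h2 := trace_nonneg hP2
      have h3 : (E * ρ * Eᴴ).trace + (E * mconj ρ * Eᴴ).trace = 0 := by
        rw [← Matrix.trace_add, hsum, Matrix.trace_zero]
      have h4 : (E * ρ * Eᴴ).trace ≤ 0 := by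
        rw [← h3]; simpa using h2
      exact le_antisymm h4 h1
    have hEρE : E * ρ * Eᴴ = 0 := trace_eq_zero_of_psd hP1 htr0
    have hEGr : E * Gr = 0 := by
      have h1 : (E * Gr) * (E * Gr)ᴴ = 0 := by
        rw [conjTranspose_mul, hGrherm]
        calc E * Gr * (Gr * Eᴴ) = E * (Gr * Gr) * Eᴴ := by simp only [Matrix.mul_assoc]
          _ = E * ρ * Eᴴ := by rw [hGrGr]
          _ = 0 := hEρE
      have h2 : (E * Gr)ᴴᴴ * (E * Gr)ᴴ = 0 := by
        rw [conjTranspose_conjTranspose, h1]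
      have h3 : (E * Gr)ᴴ = 0 := Matrix.conjTranspose_mul_self_eq_zero.mp h2
      have := congrArg conjTranspose h3
      simpa using this
    have hGr' : (G * N) * Gr = Gr := by
      have : Gr - (G * N) * Gr = 0 := by
        have h1 : E * Gr = Gr - (G * N) * Gr := by rw [hEdef, Matrix.sub_mul, Matrix.one_mul]
        rw [← h1, hEGr]
      linear_combination (norm := noncomm_ring) -this
    calc (G * N) * ρ = (G * N) * (Gr * Gr) := by rw [hGrGr]
      _ = ((G * N) * Gr) * Gr := by simp only [Matrix.mul_assoc]
      _ = Gr * Gr := by rw [hGr']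
      _ = ρ := hGrGr
  have hρPi : ρ * (G * N) = ρ := by
    have := congrArg conjTranspose hPiρ
    rwa [conjTranspose_mul, hPiherm, hρ.1.eq] at this
  -- B = N * S satisfies B Bᴴ = ρ
  have hBBH : (N * S) * (N * S)ᴴ = ρ := by
    rw [conjTranspose_mul, hNH.eq, hSherm]
    calc N * S * (S * N) = N * (S * S) * N := by simp only [Matrix.mul_assoc]
      _ = N * P * N := by rw [hSS]
      _ = N * (G * ρ * G) * N := by rw [hPdef]
      _ = (N * G) * ρ * (G * N) := by simp only [Matrix.mul_assoc]
      _ = (G * N) * ρ * (G * N) := by rw [← hNc]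
      _ = ρ * (G * N) := by rw [hPiρ]
      _ = ρ := hρPi
  -- trace identities
  have hTrS_real : S.trace = ((S.trace.re : ℝ) : ℂ) := trace_re_cast hS
  have hTrSm : (mconj S).trace = S.trace := by
    rw [trace_mconj, hTrS_real]
    simp [Complex.star_def, Complex.conj_ofReal]
  -- the quantity q and its Uhlmann bound
  set q := ((N * S) * (mconj (N * S))ᴴ).trace with hqdef
  have hqre : q.re ≤ fidelity ρ (mconj ρ) := uhlmann hρ hBBH
  have hmNS : mconj (N * S) = N * mconj S := by rw [mconj_mul, hNconj]
  have hq1 : q = (N * (S * (mconj S * N))).trace := by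
    rw [hqdef, hmNS, conjTranspose_mul, hSmherm, hNH.eq]
    congr 1; simp only [Matrix.mul_assoc]
  -- trace identities for the four terms
  have hGNNG : G * N * (N * G) = G * N := by
    calc G * N * (N * G) = G * N * (G * N) := by rw [← hNc]
      _ = (G * N * G) * N := by simp only [Matrix.mul_assoc]
      _ = G * N := by rw [hNa]
  have t11 : (S * (N * (N * S))).trace = 1 := by
    calc (S * (N * (N * S))).trace = ((N * (N * S)) * S).trace := Matrix.trace_mul_comm _ _
      _ = (N * (N * (S * S))).trace := by congr 1; simp only [Matrix.mul_assoc]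
      _ = (N * (N * P)).trace := by rw [hSS]
      _ = ((N * (N * (G * ρ))) * G).trace := by
          rw [hPdef]; congr 1; simp only [Matrix.mul_assoc]
      _ = (G * (N * (N * (G * ρ)))).trace := Matrix.trace_mul_comm _ _
      _ = ((G * N * (N * G)) * ρ).trace := by congr 1; simp only [Matrix.mul_assoc]
      _ = ((G * N) * ρ).trace := by rw [hGNNG]
      _ = ρ.trace := by rw [hPiρ]
      _ = 1 := htr
  have t22 : (mconj S * (N * (N * mconj S))).trace = 1 := by
    have e : mconj S * (N * (N * mconj S)) = mconj (S * (N * (N * S))) := by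
      rw [mconj_mul, mconj_mul, mconj_mul, hNconj]
    rw [e, trace_mconj, t11]
    simp
  have t21 : (mconj S * (N * (N * S))).trace = q := by
    rw [hq1]
    calc (mconj S * (N * (N * S))).trace
        = ((N * (N * S)) * mconj S).trace := Matrix.trace_mul_comm _ _
      _ = (N * ((N * (S * mconj S)))).trace := by congr 1; simp only [Matrix.mul_assoc]
      _ = ((N * (S * mconj S)) * N).trace := Matrix.trace_mul_comm _ _
      _ = (N * (S * (mconj S * N))).trace := by congr 1; simp only [Matrix.mul_assoc]
  have t12 : (S * (N * (N * mconj S))).trace = star q := by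
    have hstarq : star q = (N * (mconj S * (S * N))).trace := by
      rw [hq1, ← trace_mconj]
      congr 1
      rw [mconj_mul, mconj_mul, mconj_mul, hNconj, mconj_mconj]
    rw [hstarq]
    calc (S * (N * (N * mconj S))).trace
        = ((N * (N * mconj S)) * S).trace := Matrix.trace_mul_comm _ _
      _ = ((N * (N * (mconj S * S)))).trace := by congr 1; simp only [Matrix.mul_assoc]
      _ = ((N * (mconj S * S)) * N).trace := Matrix.trace_mul_comm _ _
      _ = (N * (mconj S * (S * N))).trace := by congr 1; simp only [Matrix.mul_assoc]
  -- Cauchy–Schwarz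
  set T := S + mconj S with hTdef
  have hTherm : Tᴴ = T := by rw [hTdef, conjTranspose_add, hSherm, hSmherm]
  have hXY : Gᴴ * (N * T) = T := by
    calc Gᴴ * (N * T) = (G * N) * T := by rw [hGherm, Matrix.mul_assoc]
      _ = (G * N) * S + (G * N) * mconj S := by rw [hTdef, Matrix.mul_add]
      _ = T := by rw [hPiS, hPiSm, hTdef]
  have hXYtr : (Gᴴ * (N * T)).trace = 2 * S.trace := by
    rw [hXY, hTdef, Matrix.trace_add, hTrSm]
    ring
  have hXXtr : (Gᴴ * G).trace = 1 := by rw [hGherm, hGG, hτtr]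
  have hYYtr : ((N * T)ᴴ * (N * T)).trace = 2 + (q + star q) := by
    have hYH : (N * T)ᴴ = T * N := by rw [conjTranspose_mul, hNH.eq, hTherm]
    have hexpand : (N * T)ᴴ * (N * T)
        = S * (N * (N * S)) + S * (N * (N * mconj S))
          + (mconj S * (N * (N * S)) + mconj S * (N * (N * mconj S))) := by
      rw [hYH, hTdef]
      noncomm_ring
    rw [hexpand, Matrix.trace_add, Matrix.trace_add, Matrix.trace_add, t11, t12, t21, t22]
    ring
  have hCS := cs_trace G (N * T)
  rw [hXYtr, hXXtr, hYYtr] at hCS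
  -- pass to real numbers
  set c := S.trace.re with hcdef
  have hc0 : (0:ℝ) ≤ c := by
    have h0 := trace_nonneg hS
    rw [Complex.le_def] at h0
    simpa [hcdef] using h0.1
  have hlhs : ‖2 * S.trace‖ ^ 2 = 4 * c ^ 2 := by
    rw [hTrS_real]
    have : (2:ℂ) * ((c:ℝ):ℂ) = (((2*c : ℝ)):ℂ) := by push_cast; ring
    rw [this, Complex.norm_real, Real.norm_eq_abs]
    rw [_root_.abs_of_nonneg (by linarith : (0:ℝ) ≤ 2 * c)]
    ring
  have hrhs : ((1:ℂ)).re * ((2:ℂ) + (q + star q)).re = 2 + 2 * q.re := by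
    simp only [Complex.one_re, Complex.add_re, Complex.star_def, Complex.conj_re]
    norm_num
    ring
  rw [hlhs] at hCS
  rw [hrhs] at hCS
  -- conclusion
  have hFτ : fidelity ρ τ = c := by rw [hFr, hcdef]
  have hFm := hqre
  rw [hFτ]
  nlinarith [hCS, hFm]

end Aux

theorem stmt8 (d : ℕ) (ρ : Matrix (Fin d) (Fin d) ℂ) (hρ : IsDensityMatrix ρ) :
    Mg ρ ≤ 1 - (1 - MRe ρ) ^ 2 := by
  obtain ⟨hpsd, htr⟩ := hρ
  have hkey := Aux.key hpsd htr
  unfold Mg MRe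
  nlinarith [hkey]
end
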